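/- arXiv:1710.04893 — 5 statements merged into one kernel-verified Lean document; each statement's English description precedes it below -/
import Mathlib

section
/- Let A be a bounded linear operator on a complex Hilbert space H with polar decomposition A = U|A|, and let f, g be non-negative continuous functions on [0,∞) with f(x)g(x) = x for all x ≥ 0. Then the numerical radius satisfies w(A) ≤ (1/4)‖g²(|A|) + f²(|A|)‖ + (1/2)w(f(|A|)·U·g(|A|)). -/
set_option linter.unusedSectionVars false
set_option linter.unusedVariables false
set_option maxHeartbeats 1000000


noncomputable section
open ContinuousLinearMap

variable {H : Type*} [NormedAddCommGroup H] [InnerProductSpace ℂ H] [CompleteSpace H]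

/-- The numerical radius of a bounded operator. -/
def nrad (A : H →L[ℂ] H) : ℝ :=
  sSup {r : ℝ | ∃ x : H, ‖x‖ = 1 ∧ r = ‖(inner ℂ (A x) x : ℂ)‖}

lemma nrad_bddAbove (B : H →L[ℂ] H) :
    BddAbove {r : ℝ | ∃ x : H, ‖x‖ = 1 ∧ r = ‖(inner ℂ (B x) x : ℂ)‖} := by
  refine ⟨‖B‖, ?_⟩
  rintro r ⟨x, hx, rfl⟩
  calc ‖(inner ℂ (B x) x : ℂ)‖ ≤ ‖B x‖ * ‖x‖ := norm_inner_le_norm _ _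
    _ ≤ (‖B‖ * ‖x‖) * ‖x‖ := by gcongr; exact B.le_opNorm x
    _ = ‖B‖ := by rw [hx]; ring

lemma nrad_nonneg (B : H →L[ℂ] H) : 0 ≤ nrad B := by
  rcases Set.eq_empty_or_nonempty
      {r : ℝ | ∃ x : H, ‖x‖ = 1 ∧ r = ‖(inner ℂ (B x) x : ℂ)‖} with h | h
  · rw [nrad, h, Real.sSup_empty]
  · obtain ⟨r, x, hx, rfl⟩ := h
    exact le_trans (norm_nonneg _) (le_csSup (nrad_bddAbove B) ⟨x, hx, rfl⟩)

lemma inner_le_nrad (B : H →L[ℂ] H) {x : H} (hx : ‖x‖ = 1) :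
    ‖(inner ℂ (B x) x : ℂ)‖ ≤ nrad B :=
  le_csSup (nrad_bddAbove B) ⟨x, hx, rfl⟩

lemma nrad_le (B : H →L[ℂ] H) {c : ℝ} (hc : 0 ≤ c)
    (h : ∀ x : H, ‖x‖ = 1 → ‖(inner ℂ (B x) x : ℂ)‖ ≤ c) : nrad B ≤ c :=
  Real.sSup_le (by rintro r ⟨x, hx, rfl⟩; exact h x hx) hc

lemma nrad_smul (u : ℂ) (hu : ‖u‖ = 1) (B : H →L[ℂ] H) : nrad (u • B) = nrad B := by
  unfold nrad
  congr 1
  ext r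
  constructor
  · rintro ⟨x, hx, rfl⟩
    exact ⟨x, hx, by simp [inner_smul_left, hu]⟩
  · rintro ⟨x, hx, rfl⟩
    exact ⟨x, hx, by simp [inner_smul_left, hu]⟩

open ComplexConjugate in
lemma sa_inner_bound (S : H →L[ℂ] H) {M : ℝ}
    (h : ∀ x : H, ‖x‖ = 1 → ‖(inner ℂ (S x) x : ℂ)‖ ≤ M) (x : H) :
    ‖(inner ℂ (S x) x : ℂ)‖ ≤ M * ‖x‖ ^ 2 := by
  rcases eq_or_ne x 0 with rfl | hx0
  · simp
  · have hnx : (0:ℝ) < ‖x‖ := norm_pos_iff.mpr hx0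
    set c : ℂ := (‖x‖ : ℂ)⁻¹ with hc
    have hnc : ‖c‖ = ‖x‖⁻¹ := by
      rw [hc, norm_inv, Complex.norm_real, Real.norm_eq_abs, abs_of_pos hnx]
    have hy : ‖(c • x : H)‖ = 1 := by
      rw [norm_smul, hnc]; field_simp
    have hs : (inner ℂ (S (c • x)) (c • x) : ℂ) = conj c * c * inner ℂ (S x) x := by
      rw [map_smul, inner_smul_left, inner_smul_right]; ring
    have h2 := h _ hy
    rw [hs, norm_mul, norm_mul, RCLike.norm_conj, hnc] at h2
    calc ‖(inner ℂ (S x) x : ℂ)‖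
        = ‖x‖^2 * (‖x‖⁻¹ * ‖x‖⁻¹ * ‖(inner ℂ (S x) x : ℂ)‖) := by field_simp
      _ ≤ ‖x‖^2 * M := by gcongr
      _ = M * ‖x‖^2 := by ring

open ComplexConjugate in
lemma sa_norm_le (S : H →L[ℂ] H) (hS : IsSelfAdjoint S) {M : ℝ} (hM : 0 ≤ M)
    (h : ∀ x : H, ‖x‖ = 1 → ‖(inner ℂ (S x) x : ℂ)‖ ≤ M) : ‖S‖ ≤ M := by
  have hadj : ContinuousLinearMap.adjoint S = S := hS.adjoint_eq
  have h' : ∀ x : H, |Complex.re (inner ℂ (S x) x : ℂ)| ≤ M * ‖x‖ ^ 2 := fun x =>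
    (Complex.abs_re_le_norm _).trans (sa_inner_bound S h x)
  have key : ∀ x y : H, Complex.re (inner ℂ (S x) y : ℂ) ≤ (M / 2) * (‖x‖^2 + ‖y‖^2) := by
    intro x y
    have e2 : (inner ℂ (S y) x : ℂ) = conj (inner ℂ (S x) y : ℂ) := by
      conv_lhs => rw [← hadj, ContinuousLinearMap.adjoint_inner_left]
      rw [← inner_conj_symm]
    have e1 : (inner ℂ (S (x+y)) (x+y) : ℂ) - inner ℂ (S (x-y)) (x-y)
        = 2 * ((inner ℂ (S x) y : ℂ) + conj (inner ℂ (S x) y : ℂ)) := by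
      rw [← e2]
      simp only [map_add, map_sub, inner_add_left, inner_add_right, inner_sub_left,
        inner_sub_right]
      ring
    rw [Complex.add_conj] at e1
    have e3 : Complex.re ((inner ℂ (S (x+y)) (x+y) : ℂ)) - Complex.re ((inner ℂ (S (x-y)) (x-y) : ℂ))
        = 4 * Complex.re (inner ℂ (S x) y : ℂ) := by
      have e4 := congrArg Complex.re e1
      simp only [Complex.sub_re, Complex.mul_re, Complex.ofReal_re, Complex.ofReal_im] at e4
      simp only [Complex.re_ofNat, Complex.im_ofNat] at e4
      rw [e4]; ring
    have b1 := (le_abs_self _).trans (h' (x+y))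
    have b2 := (neg_le_abs _).trans (h' (x-y))
    have hpar : ‖x + y‖^2 + ‖x - y‖^2 = 2 * (‖x‖^2 + ‖y‖^2) := by
      have := parallelogram_law_with_norm ℂ x y
      linarith [this]
    nlinarith [b1, b2]
  refine S.opNorm_le_bound hM (fun x => ?_)
  rcases eq_or_ne (S x) 0 with h0 | h0
  · simp [h0]; positivity
  · have hSx : (0:ℝ) < ‖S x‖ := norm_pos_iff.mpr h0
    have hx0 : x ≠ 0 := by rintro rfl; simp at h0
    have hnx : (0:ℝ) < ‖x‖ := norm_pos_iff.mpr hx0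
    set c : ℂ := ((‖x‖ / ‖S x‖ : ℝ) : ℂ) with hc
    have hre : Complex.re (inner ℂ (S x) (c • (S x)) : ℂ) = ‖x‖ * ‖S x‖ := by
      have hin : (inner ℂ (S x) (c • (S x)) : ℂ) = ((‖x‖ * ‖S x‖ : ℝ) : ℂ) := by
        have hne : ((‖S x‖:ℝ):ℂ) ≠ 0 := by exact_mod_cast hSx.ne'
        rw [inner_smul_right, inner_self_eq_norm_sq_to_K, hc]
        push_cast
        field_simp
        ring_nf
        rfl
      rw [hin, Complex.ofReal_re]
    have hyn : ‖(c • (S x) : H)‖ = ‖x‖ := by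
      rw [norm_smul, hc, Complex.norm_real, Real.norm_eq_abs,
        abs_of_pos (by positivity), div_mul_cancel₀]
      exact hSx.ne'
    have := key x (c • S x)
    rw [hre, hyn] at this
    have : ‖x‖ * ‖S x‖ ≤ M * ‖x‖^2 := by nlinarith
    nlinarith

/-- The absolute value |A| = (A*A)^(1/2) via continuous functional calculus. -/
def oabs (A : H →L[ℂ] H) : H →L[ℂ] H := cfc Real.sqrt (adjoint A * A)

/-- The 2×2 block operator matrix [[A,B],[C,D]] on the Hilbert space H ⊕ H. -/
def blk (A B C D : H →L[ℂ] H) : WithLp 2 (H × H) →L[ℂ] WithLp 2 (H × H) :=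
  ((WithLp.prodContinuousLinearEquiv 2 ℂ H H).symm.toContinuousLinearMap).comp
    ((((A.comp (fst ℂ H H)) + B.comp (snd ℂ H H)).prod
      ((C.comp (fst ℂ H H)) + D.comp (snd ℂ H H))).comp
      (WithLp.prodContinuousLinearEquiv 2 ℂ H H).toContinuousLinearMap)

theorem stmt_0 (A U : H →L[ℂ] H)
    (hU : A = U * oabs A)
    (hker : LinearMap.ker (U : H →ₗ[ℂ] H) = (LinearMap.range (oabs A : H →ₗ[ℂ] H))ᗮ)
    (hiso : ∀ x ∈ (LinearMap.ker (U : H →ₗ[ℂ] H))ᗮ, ‖U x‖ = ‖x‖)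
    (f g : ℝ → ℝ) (hf : Continuous f) (hg : Continuous g)
    (hf0 : ∀ x, 0 ≤ x → 0 ≤ f x) (hg0 : ∀ x, 0 ≤ x → 0 ≤ g x)
    (hfg : ∀ x, 0 ≤ x → f x * g x = x) :
    nrad A ≤ (1 / 4) * ‖cfc (fun x => g x ^ 2) (oabs A) + cfc (fun x => f x ^ 2) (oabs A)‖
      + (1 / 2) * nrad (cfc f (oabs A) * U * cfc g (oabs A)) := by
  set T := oabs A with hT
  set F := cfc f T with hFdef
  set G := cfc g T with hGdef
  have hsa : IsSelfAdjoint (adjoint A * A) := by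
    rw [← ContinuousLinearMap.star_eq_adjoint]
    exact IsSelfAdjoint.star_mul_self A
  have hTsa : IsSelfAdjoint T := cfc_predicate _ _
  have hTnn : (0 : H →L[ℂ] H) ≤ T := cfc_nonneg (fun x _ => Real.sqrt_nonneg x)
  have hspec : ∀ x ∈ spectrum ℝ T, 0 ≤ x := fun x hx => spectrum_nonneg_of_nonneg hTnn hx
  have hFsa : IsSelfAdjoint F := cfc_predicate _ _
  have hGsa : IsSelfAdjoint G := cfc_predicate _ _
  have hGF : G * F = T := by
    rw [hGdef, hFdef, ← cfc_mul _ _ T hg.continuousOn hf.continuousOn]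
    calc cfc (fun x => g x * f x) T = cfc (fun x : ℝ => x) T :=
          cfc_congr (fun x hx => by rw [mul_comm]; exact hfg x (hspec x hx))
      _ = T := cfc_id' ℝ T
  have hA : A = U * G * F := by rw [hU, ← hGF, ← mul_assoc]
  -- contraction property of U
  have hUle : ∀ x : H, ‖U x‖ ≤ ‖x‖ := by
    intro x
    have hcl : IsClosed ((LinearMap.ker (U : H →ₗ[ℂ] H) : Submodule ℂ H) : Set H) :=
      ContinuousLinearMap.isClosed_ker U
    have : CompleteSpace (LinearMap.ker (U : H →ₗ[ℂ] H) : Submodule ℂ H) := hcl.completeSpace_coe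
    obtain ⟨y, hy, z, hz, rfl⟩ := Submodule.exists_add_mem_mem_orthogonal
      (K := (LinearMap.ker (U : H →ₗ[ℂ] H) : Submodule ℂ H)) x
    have hUy : U y = 0 := hy
    have horth : (inner ℂ y z : ℂ) = 0 := Submodule.inner_right_of_mem_orthogonal hy hz
    have hnorm : ‖y + z‖ * ‖y + z‖ = ‖y‖ * ‖y‖ + ‖z‖ * ‖z‖ :=
      norm_add_sq_eq_norm_sq_add_norm_sq_of_inner_eq_zero y z horth
    have h1 : U (y + z) = U z := by rw [map_add, hUy, zero_add]
    rw [h1, hiso z hz]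
    nlinarith [norm_nonneg y, norm_nonneg z, norm_nonneg (y+z)]
  -- U†U ≤ 1
  have hUUsa : IsSelfAdjoint ((ContinuousLinearMap.adjoint U) * U) := by
    rw [← ContinuousLinearMap.star_eq_adjoint]; exact IsSelfAdjoint.star_mul_self U
  have hUU : (ContinuousLinearMap.adjoint U) * U ≤ 1 := by
    rw [ContinuousLinearMap.le_def, ContinuousLinearMap.isPositive_def']
    refine ⟨((IsSelfAdjoint.one _).sub hUUsa), fun x => ?_⟩
    rw [ContinuousLinearMap.reApplyInnerSelf_apply]
    have hx1 : ((1 - ContinuousLinearMap.adjoint U * U) x)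
        = x - (ContinuousLinearMap.adjoint U) (U x) := by
      simp [ContinuousLinearMap.sub_apply, ContinuousLinearMap.mul_apply]
    rw [hx1, inner_sub_left, ContinuousLinearMap.adjoint_inner_left, map_sub]
    rw [inner_self_eq_norm_sq, inner_self_eq_norm_sq]
    nlinarith [hUle x, norm_nonneg x, norm_nonneg (U x)]
  have hXXle : G * ((ContinuousLinearMap.adjoint U) * U) * G ≤ G * G := by
    have h1 : (0 : H →L[ℂ] H) ≤ 1 - ContinuousLinearMap.adjoint U * U := by
      rw [sub_nonneg]; exact hUU
    have h2 := IsSelfAdjoint.conjugate_nonneg h1 hGsa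
    have h3 : G * (1 - ContinuousLinearMap.adjoint U * U) * G
        = G * G - G * (ContinuousLinearMap.adjoint U * U) * G := by noncomm_ring
    rw [h3] at h2
    rw [← sub_nonneg]
    exact h2
  have hcfcg2 : cfc (fun x => g x ^ 2) T = G * G := by
    rw [cfc_pow g 2 T hg.continuousOn hTsa, sq]
  have hcfcf2 : cfc (fun x => f x ^ 2) T = F * F := by
    rw [cfc_pow f 2 T hf.continuousOn hTsa, sq]
  have main : ∀ x : H, ‖x‖ = 1 → ‖(inner ℂ (A x) x : ℂ)‖ ≤
      (1/4) * ‖cfc (fun x => g x ^ 2) T + cfc (fun x => f x ^ 2) T‖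
        + (1/2) * nrad (F * U * G) := by
    intro x hx
    set c : ℂ := inner ℂ (A x) x with hcdef
    rcases eq_or_ne c 0 with hc0 | hc0
    · rw [hc0, norm_zero]
      have h1 := nrad_nonneg (F * U * G)
      positivity
    · set u : ℂ := c / ‖c‖ with hudef
      have hcne : ((‖c‖ : ℝ) : ℂ) ≠ 0 := by
        exact_mod_cast (norm_ne_zero_iff.mpr hc0)
      have hu1 : ‖u‖ = 1 := by
        rw [hudef, norm_div, Complex.norm_real, Real.norm_eq_abs,
          abs_of_pos (norm_pos_iff.mpr hc0), div_self (norm_ne_zero_iff.mpr hc0)]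
      have hsu : star u * u = 1 := by
        have := RCLike.conj_mul u
        rw [RCLike.star_def, this, hu1]
        norm_num
      set X : H →L[ℂ] H := star u • (G * ContinuousLinearMap.adjoint U) with hXdef
      set Y := F with hYdef
      have hstarB : star (G * ContinuousLinearMap.adjoint U) = U * G := by
        rw [star_mul, ContinuousLinearMap.star_eq_adjoint,
          ContinuousLinearMap.adjoint_adjoint, hGsa.star_eq]
      have hstarX : star X = u • (U * G) := by
        rw [hXdef, star_smul, star_star, hstarB]
      have ha1 : star X * Y = u • A := by
        rw [hstarX, hYdef, smul_mul_assoc, hA]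
      have hval : ((‖c‖ : ℝ) : ℂ) = inner ℂ ((star X * Y) x) x := by
        have hkey : (starRingEnd ℂ) u * c = ((‖c‖ : ℝ) : ℂ) := by
          rw [hudef, map_div₀, Complex.conj_ofReal, div_mul_eq_mul_div, mul_comm,
            Complex.mul_conj, Complex.normSq_eq_norm_sq]
          push_cast
          rw [sq, mul_div_assoc, div_self hcne, mul_one]
        rw [ha1]
        have h1 : ((u • A) x) = u • (A x) := rfl
        rw [h1, inner_smul_left, ← hcdef, hkey]
      have hre : ‖c‖ = Complex.re (inner ℂ (Y x) (X x) : ℂ) := by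
        have h1 : inner ℂ ((star X * Y) x) x = (inner ℂ (Y x) (X x) : ℂ) := by
          rw [ContinuousLinearMap.mul_apply, ContinuousLinearMap.star_eq_adjoint,
            ContinuousLinearMap.adjoint_inner_left]
        rw [← h1, ← hval, Complex.ofReal_re]
      have hstep1 : 4 * Complex.re (inner ℂ (Y x) (X x) : ℂ) ≤ ‖X x + Y x‖^2 := by
        have hsub : (0:ℝ) ≤ ‖X x - Y x‖^2 := sq_nonneg _
        have hadd := norm_add_sq (𝕜 := ℂ) (X x) (Y x)
        have hsub2 := norm_sub_sq (𝕜 := ℂ) (X x) (Y x)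
        have hsym : RCLike.re (inner ℂ (X x) (Y x) : ℂ)
            = Complex.re (inner ℂ (Y x) (X x) : ℂ) := by
          rw [inner_re_symm]
          rfl
        rw [hsym] at hadd hsub2
        nlinarith [hadd, hsub2, hsub]
      have hstep2 : ‖X x + Y x‖^2 ≤ ‖(X + Y) * star (X + Y)‖ := by
        have h1 : ‖X x + Y x‖ ≤ ‖X + Y‖ := by
          have h2 := (X + Y).le_opNorm x
          rw [hx, mul_one, ContinuousLinearMap.add_apply] at h2
          exact h2
        calc ‖X x + Y x‖^2 ≤ ‖X + Y‖^2 := by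
              gcongr
          _ = ‖(X + Y) * star (X + Y)‖ := by rw [CStarRing.norm_self_mul_star, sq]
      have hexp : (X + Y) * star (X + Y)
          = (X * star X + Y * star Y) + (X * star Y + Y * star X) := by
        rw [star_add]; noncomm_ring
      have hXX : X * star X = G * ((ContinuousLinearMap.adjoint U) * U) * G := by
        rw [hXdef, hstarX]
        rw [smul_mul_assoc, mul_smul_comm, smul_smul, hsu, one_smul]
        noncomm_ring
      have hYY : Y * star Y = F * F := by rw [hYdef, hFsa.star_eq]
      have hposXX : (0 : H →L[ℂ] H) ≤ X * star X := mul_star_self_nonneg X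
      have hposYY : (0 : H →L[ℂ] H) ≤ Y * star Y := mul_star_self_nonneg Y
      have hsumle : X * star X + Y * star Y
          ≤ cfc (fun x => g x ^ 2) T + cfc (fun x => f x ^ 2) T := by
        rw [hcfcg2, hcfcf2, hXX, hYY]
        exact add_le_add_left hXXle _
      have hnorm1 : ‖X * star X + Y * star Y‖
          ≤ ‖cfc (fun x => g x ^ 2) T + cfc (fun x => f x ^ 2) T‖ :=
        CStarAlgebra.norm_le_norm_of_nonneg_of_le (add_nonneg hposXX hposYY) hsumle
      set Z : H →L[ℂ] H := u • (F * U * G) with hZdef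
      have hstarZ : star Z = star u • (G * ContinuousLinearMap.adjoint U * F) := by
        rw [hZdef, star_smul, star_mul, star_mul, hGsa.star_eq, hFsa.star_eq,
          ContinuousLinearMap.star_eq_adjoint, ← mul_assoc]
      have hcross : X * star Y + Y * star X = star Z + Z := by
        rw [hstarZ, hstarX, hYdef, hXdef, hFsa.star_eq, hZdef,
          smul_mul_assoc, mul_smul_comm, mul_assoc F U G]
      have hZsa : IsSelfAdjoint (star Z + Z) := IsSelfAdjoint.star_add_self Z
      have hnrZ : nrad Z = nrad (F * U * G) := by rw [hZdef]; exact nrad_smul u hu1 _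
      have hnormcross : ‖star Z + Z‖ ≤ 2 * nrad (F * U * G) := by
        apply sa_norm_le _ hZsa
        · have := nrad_nonneg (F * U * G); linarith
        · intro y hy
          have h1 : (inner ℂ ((star Z + Z) y) y : ℂ)
              = (starRingEnd ℂ) (inner ℂ (Z y) y) + inner ℂ (Z y) y := by
            rw [ContinuousLinearMap.add_apply, inner_add_left]
            congr 1
            rw [ContinuousLinearMap.star_eq_adjoint, ContinuousLinearMap.adjoint_inner_left]
            exact (inner_conj_symm y (Z y)).symm
          have h2 : (starRingEnd ℂ) (inner ℂ (Z y) y : ℂ) + inner ℂ (Z y) y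
              = ((2 * Complex.re (inner ℂ (Z y) y) : ℝ) : ℂ) := by
            rw [add_comm, Complex.add_conj]
          rw [h1, h2, Complex.norm_real]
          have h3 : |Complex.re (inner ℂ (Z y) y : ℂ)| ≤ ‖(inner ℂ (Z y) y : ℂ)‖ :=
            Complex.abs_re_le_norm _
          have h4 : ‖(inner ℂ (Z y) y : ℂ)‖ ≤ nrad Z := by
            rw [← hnrZ] at *
            exact inner_le_nrad Z hy
          rw [Real.norm_eq_abs, abs_mul]
          calc |(2:ℝ)| * |Complex.re (inner ℂ (Z y) y : ℂ)|
              ≤ 2 * ‖(inner ℂ (Z y) y : ℂ)‖ := by rw [abs_two]; gcongr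
            _ ≤ 2 * nrad (F * U * G) := by rw [← hnrZ]; gcongr
      have e2 : ‖(X + Y) * star (X + Y)‖
          ≤ ‖cfc (fun x => g x ^ 2) T + cfc (fun x => f x ^ 2) T‖
            + 2 * nrad (F * U * G) := by
        rw [hexp]
        calc ‖(X * star X + Y * star Y) + (X * star Y + Y * star X)‖
            ≤ ‖X * star X + Y * star Y‖ + ‖X * star Y + Y * star X‖ := norm_add_le _ _
          _ ≤ _ := by
              rw [hcross]
              exact add_le_add hnorm1 hnormcross
      rw [hre]
      linarith [hstep1, hstep2, e2]
  refine nrad_le A ?_ main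
  have h0 := nrad_nonneg (F * U * G)
  positivity
end
end

section
/- Let X, Y, S, T be bounded linear operators on a complex Hilbert space. Then the spectral radius satisfies r(XY + ST) ≤ (1/2)(w(YX) + w(TS)) + (1/2)√((w(YX) − w(TS))² + 4‖YS‖‖TX‖). -/
noncomputable section
open ContinuousLinearMap

variable {H : Type*} [NormedAddCommGroup H] [InnerProductSpace ℂ H] [CompleteSpace H]

set_option linter.unusedSectionVars false
set_option maxHeartbeats 2000000

section GeneralAux
variable {E : Type*} [NormedAddCommGroup E] [InnerProductSpace ℂ E]

def nr' (A : E →L[ℂ] E) : ℝ :=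
  sSup {r : ℝ | ∃ x : E, ‖x‖ = 1 ∧ r = ‖(inner ℂ (A x) x : ℂ)‖}

lemma nr'_bddAbove (A : E →L[ℂ] E) :
    BddAbove {r : ℝ | ∃ x : E, ‖x‖ = 1 ∧ r = ‖(inner ℂ (A x) x : ℂ)‖} := by
  refine ⟨‖A‖, fun r hr => ?_⟩
  obtain ⟨x, hx, rfl⟩ := hr
  calc ‖(inner ℂ (A x) x : ℂ)‖ ≤ ‖A x‖ * ‖x‖ := norm_inner_le_norm _ _
    _ ≤ ‖A‖ * ‖x‖ * ‖x‖ := by gcongr; exact A.le_opNorm x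
    _ = ‖A‖ := by rw [hx]; ring

lemma nr'_nonneg (A : E →L[ℂ] E) : 0 ≤ nr' A := by
  apply Real.sSup_nonneg
  rintro r ⟨x, hx, rfl⟩
  positivity

lemma inner_le_nr' (A : E →L[ℂ] E) (x : E) :
    ‖(inner ℂ (A x) x : ℂ)‖ ≤ nr' A * ‖x‖ ^ 2 := by
  rcases eq_or_ne x 0 with rfl | hx
  · simp
  · have hn : (0:ℝ) < ‖x‖ := norm_pos_iff.mpr hx
    set c : ℂ := (‖x‖ : ℂ)⁻¹ with hc
    set u : E := c • x with hu
    have hcn : ‖c‖ = ‖x‖⁻¹ := by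
      rw [hc, norm_inv, Complex.norm_real, Real.norm_eq_abs, abs_of_pos hn]
    have hu1 : ‖u‖ = 1 := by
      rw [hu, norm_smul, hcn, inv_mul_cancel₀ hn.ne']
    have hle : ‖(inner ℂ (A u) u : ℂ)‖ ≤ nr' A :=
      le_csSup (nr'_bddAbove A) ⟨u, hu1, rfl⟩
    have hinner : (inner ℂ (A u) u : ℂ) = (starRingEnd ℂ) c * (c * inner ℂ (A x) x) := by
      rw [hu, map_smul, inner_smul_left, inner_smul_right]
    rw [hinner] at hle
    have hnorm : ‖(starRingEnd ℂ) c * (c * (inner ℂ (A x) x : ℂ))‖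
        = ‖x‖⁻¹ * (‖x‖⁻¹ * ‖(inner ℂ (A x) x : ℂ)‖) := by
      rw [norm_mul, norm_mul, RingHomIsometric.norm_map, hcn]
    rw [hnorm] at hle
    have h2 := mul_le_mul_of_nonneg_right hle (by positivity : (0:ℝ) ≤ ‖x‖^2)
    have key : ‖x‖⁻¹ * (‖x‖⁻¹ * ‖(inner ℂ (A x) x : ℂ)‖) * ‖x‖^2
        = ‖(inner ℂ (A x) x : ℂ)‖ := by
      field_simp [sq]
    rwa [key] at h2

lemma spec_le_nr' [CompleteSpace E] (A : E →L[ℂ] E) {lam : ℂ}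
    (hlam : lam ∈ spectrum ℂ A) : ‖lam‖ ≤ nr' A := by
  by_contra hcon
  push_neg at hcon
  set M : E →L[ℂ] E := algebraMap ℂ (E →L[ℂ] E) lam - A with hM
  set c : ℝ := ‖lam‖ - nr' A with hcdef
  have hc : 0 < c := sub_pos.mpr hcon
  have hinner : ∀ x : E, c * ‖x‖ ^ 2 ≤ ‖(inner ℂ (M x) x : ℂ)‖ := by
    intro x
    have hMx : M x = lam • x - A x := by
      simp [hM, Module.algebraMap_end_apply, sub_apply]
    have h1 : (inner ℂ (M x) x : ℂ) = (starRingEnd ℂ) lam * (inner ℂ x x) - inner ℂ (A x) x := by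
      rw [hMx, inner_sub_left, inner_smul_left]
    have h2 : ‖(starRingEnd ℂ) lam * (inner ℂ x x : ℂ)‖ = ‖lam‖ * ‖x‖ ^ 2 := by
      rw [norm_mul, RingHomIsometric.norm_map, inner_self_eq_norm_sq_to_K]
      norm_num

    calc c * ‖x‖ ^ 2 = ‖lam‖ * ‖x‖ ^ 2 - nr' A * ‖x‖ ^ 2 := by ring
      _ ≤ ‖lam‖ * ‖x‖ ^ 2 - ‖(inner ℂ (A x) x : ℂ)‖ := by
          have := inner_le_nr' A x; linarith
      _ ≤ ‖(inner ℂ (M x) x : ℂ)‖ := by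
          rw [h1]
          have := norm_sub_norm_le ((starRingEnd ℂ) lam * (inner ℂ x x : ℂ)) ((inner ℂ (A x) x : ℂ))
          rw [h2] at this
          linarith
  have hbelow : ∀ x : E, c * ‖x‖ ≤ ‖M x‖ := by
    intro x
    rcases eq_or_ne x 0 with rfl | hx
    · simp
    · have hn : (0:ℝ) < ‖x‖ := norm_pos_iff.mpr hx
      have h1 := hinner x
      have h2 : ‖(inner ℂ (M x) x : ℂ)‖ ≤ ‖M x‖ * ‖x‖ := norm_inner_le_norm _ _
      have := h1.trans h2
      rw [pow_two] at this
      nlinarith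
  have hanti : AntilipschitzWith (⟨c, hc.le⟩ : NNReal)⁻¹ M := by
    apply AddMonoidHomClass.antilipschitz_of_bound
    intro x
    have h := hbelow x
    change ‖x‖ ≤ c⁻¹ * ‖M x‖
    rw [inv_mul_eq_div, le_div_iff₀ hc]
    linarith [hbelow x]
  have hdense : M.range.topologicalClosure = ⊤ := by
    rw [Submodule.topologicalClosure_eq_top_iff]
    rw [Submodule.eq_bot_iff]
    intro x hx
    have h0 : (inner ℂ (M x) x : ℂ) = 0 := hx (M x) ⟨x, rfl⟩
    have h1 := hinner x
    rw [h0] at h1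
    simp only [norm_zero] at h1
    have : ‖x‖ ^ 2 ≤ 0 := by nlinarith
    have : ‖x‖ = 0 := by nlinarith [sq_nonneg ‖x‖, norm_nonneg x]
    exact norm_eq_zero.mp this
  have hbij : Function.Bijective M :=
    (M.bijective_iff_dense_range_and_antilipschitz).mpr ⟨hdense, _, hanti⟩
  let e := ContinuousLinearEquiv.ofBijective M
    ((LinearMap.ker_eq_bot (f := (M : E →ₗ[ℂ] E))).mpr hbij.1) (LinearMap.range_eq_top.mpr hbij.2)
  have hcoe : ⇑e = ⇑M := ContinuousLinearEquiv.coeFn_ofBijective M _ _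
  have hunit : IsUnit M := by
    refine ⟨⟨M, e.symm.toContinuousLinearMap, ?_, ?_⟩, rfl⟩
    · ext x
      show M (e.symm.toContinuousLinearMap x) = x
      have h : M (e.symm x) = e (e.symm x) := (congrFun hcoe _).symm
      show M (e.symm x) = x
      rw [h, ContinuousLinearEquiv.apply_symm_apply]
    · ext x
      show e.symm.toContinuousLinearMap (M x) = x
      have h : M x = e x := (congrFun hcoe _).symm
      show e.symm (M x) = x
      rw [h, ContinuousLinearEquiv.symm_apply_apply]
  exact spectrum.mem_iff.mp hlam hunit

end GeneralAux

lemma real_opt {a d b c p q : ℝ} (ha : 0 ≤ a) (hd : 0 ≤ d) (hb : 0 ≤ b) (hc : 0 ≤ c)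
    (hp : 0 ≤ p) (hq : 0 ≤ q) (hpq : p^2 + q^2 = 1) :
    a*p^2 + d*q^2 + b*q*p + c*p*q ≤ (a+d)/2 + (1/2)*Real.sqrt ((a-d)^2 + (b+c)^2) := by
  set s := Real.sqrt ((a-d)^2 + (b+c)^2) with hs
  have hs0 : 0 ≤ s := Real.sqrt_nonneg _
  have hs2 : s^2 = (a-d)^2 + (b+c)^2 := Real.sq_sqrt (by positivity)
  set X := (a-d)*(p^2-q^2)/2 + (b+c)*p*q with hX
  have hX2 : X^2 ≤ (s/2)^2 := by
    rw [hX]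
    have key : ((a-d)^2+(b+c)^2) * (((p^2-q^2)/2)^2 + (p*q)^2)
        - ((a-d)*(p^2-q^2)/2 + (b+c)*p*q)^2
        = ((a-d)*p*q - (b+c)*(p^2-q^2)/2)^2 := by ring
    have h2 : (((p^2-q^2)/2)^2 + (p*q)^2) = 1/4 := by
      linear_combination ((p^2+q^2+1)/4) * hpq
    have h4 : ((a-d)^2+(b+c)^2) * (((p^2-q^2)/2)^2 + (p*q)^2) = (s/2)^2 := by
      rw [h2, ← hs2]; ring
    linarith [sq_nonneg ((a-d)*p*q - (b+c)*(p^2-q^2)/2), key, h4]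
  have hXs : X ≤ s/2 := by
    have h1 := Real.sqrt_le_sqrt hX2
    rw [Real.sqrt_sq_eq_abs, Real.sqrt_sq_eq_abs] at h1
    have h2 : |s/2| = s/2 := abs_of_nonneg (by positivity)
    calc X ≤ |X| := le_abs_self X
      _ ≤ |s/2| := h1
      _ = s/2 := h2
  have heq : a*p^2 + d*q^2 + b*q*p + c*p*q = (a+d)/2 + X := by
    rw [hX]; linear_combination ((a+d)/2) * hpq
  linarith

lemma sqrt_add_le' {x y : ℝ} (hx : 0 ≤ x) (hy : 0 ≤ y) :
    Real.sqrt (x + y) ≤ Real.sqrt x + Real.sqrt y := by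
  have h : x + y ≤ (Real.sqrt x + Real.sqrt y)^2 := by
    have e : (Real.sqrt x + Real.sqrt y)^2
        = Real.sqrt x^2 + Real.sqrt y^2 + 2*(Real.sqrt x*Real.sqrt y) := by ring
    rw [e, Real.sq_sqrt hx, Real.sq_sqrt hy]
    have := mul_nonneg (Real.sqrt_nonneg x) (Real.sqrt_nonneg y)
    linarith
  have := Real.sqrt_le_sqrt h
  rwa [Real.sqrt_sq (by positivity)] at this


lemma blk_apply_fst (A B C D : H →L[ℂ] H) (x : WithLp 2 (H × H)) :
    (blk A B C D x).fst = A x.fst + B x.snd := rfl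
lemma blk_apply_snd (A B C D : H →L[ℂ] H) (x : WithLp 2 (H × H)) :
    (blk A B C D x).snd = C x.fst + D x.snd := rfl

lemma blk_ext {x y : WithLp 2 (H × H)} (h1 : x.fst = y.fst) (h2 : x.snd = y.snd) : x = y :=
  WithLp.ofLp_injective _ (Prod.ext h1 h2)

lemma UV_eq (X Y S T : H →L[ℂ] H) :
    blk X S 0 0 * blk Y 0 T 0 = blk (X*Y+S*T) 0 0 0 := by
  ext x
  refine blk_ext ?_ ?_ <;>
    simp [ContinuousLinearMap.mul_apply, blk_apply_fst, blk_apply_snd,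
      ContinuousLinearMap.add_apply, ContinuousLinearMap.zero_apply]

lemma VU_eq (X Y S T : H →L[ℂ] H) :
    blk Y 0 T 0 * blk X S 0 0 = blk (Y*X) (Y*S) (T*X) (T*S) := by
  ext x
  refine blk_ext ?_ ?_ <;>
    simp [ContinuousLinearMap.mul_apply, blk_apply_fst, blk_apply_snd,
      ContinuousLinearMap.add_apply, ContinuousLinearMap.zero_apply]

def iot : H →L[ℂ] WithLp 2 (H × H) :=
  ((WithLp.prodContinuousLinearEquiv 2 ℂ H H).symm.toContinuousLinearMap).comp
    (ContinuousLinearMap.inl ℂ H H)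
def pio : WithLp 2 (H × H) →L[ℂ] H :=
  (fst ℂ H H).comp (WithLp.prodContinuousLinearEquiv 2 ℂ H H).toContinuousLinearMap

lemma iot_fst (x : H) : (iot x).fst = x := rfl
lemma iot_snd (x : H) : (iot (x : H)).snd = 0 := rfl
lemma pio_apply (z : WithLp 2 (H × H)) : pio z = z.fst := rfl

lemma spectrum_blk {A : H →L[ℂ] H} {lam : ℂ}
    (h : lam ∈ spectrum ℂ A) : lam ∈ spectrum ℂ (blk A 0 0 0) := by
  by_contra hcon
  rw [spectrum.notMem_iff] at hcon
  apply spectrum.notMem_iff.mpr _ h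
  set MK : WithLp 2 (H × H) →L[ℂ] WithLp 2 (H × H) :=
    algebraMap ℂ _ lam - blk A 0 0 0 with hMK
  set MH : H →L[ℂ] H := algebraMap ℂ _ lam - A with hMH
  set W : WithLp 2 (H × H) →L[ℂ] WithLp 2 (H × H) := ↑hcon.unit⁻¹ with hW
  have hMW : ∀ z, MK (W z) = z := fun z => by
    have h1 : MK * W = 1 := hcon.mul_val_inv
    calc MK (W z) = (MK * W) z := rfl
      _ = z := by rw [h1]; rfl
  have hWM : ∀ z, W (MK z) = z := fun z => by
    have h1 : W * MK = 1 := hcon.val_inv_mul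
    calc W (MK z) = (W * MK) z := rfl
      _ = z := by rw [h1]; rfl
  have hMK_fst : ∀ z : WithLp 2 (H × H), (MK z).fst = lam • z.fst - A z.fst := by
    intro z
    show lam • z.fst - (A z.fst + (0 : H →L[ℂ] H) z.snd) = lam • z.fst - A z.fst
    simp
  have hMK_iot : ∀ x : H, MK (iot x) = iot (MH x) := by
    intro x
    refine blk_ext ?_ ?_
    · show lam • x - (A x + (0 : H →L[ℂ] H) (iot x).snd) = MH x
      simp [hMH, sub_apply]
    · show lam • (iot x).snd - ((0 : H →L[ℂ] H) x + (0 : H →L[ℂ] H) (iot x).snd) = (0:H)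
      show lam • (0:H) - ((0 : H →L[ℂ] H) x + (0 : H →L[ℂ] H) (0:H)) = (0:H)
      simp
  set g : H →L[ℂ] H := pio.comp (W.comp iot) with hg
  refine ⟨⟨MH, g, ?_, ?_⟩, rfl⟩
  · ext x
    show MH (pio (W (iot x))) = x
    set w := W (iot x) with hw
    have h1 : MK w = iot x := hMW (iot x)
    have h2 : (MK w).fst = x := by rw [h1]; rfl
    rw [hMK_fst] at h2
    show MH w.fst = x
    rw [show MH w.fst = lam • w.fst - A w.fst by simp [hMH, sub_apply]]
    exact h2
  · ext x
    show pio (W (iot (MH x))) = x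
    rw [← hMK_iot x, hWM (iot x)]
    rfl


lemma nr'_blk_le (A B C D : H →L[ℂ] H) :
    nr' (blk A B C D) ≤ (nr' A + nr' D)/2
      + (1/2)*Real.sqrt ((nr' A - nr' D)^2 + (‖B‖+‖C‖)^2) := by
  have hR0 : 0 ≤ (nr' A + nr' D)/2
      + (1/2)*Real.sqrt ((nr' A - nr' D)^2 + (‖B‖+‖C‖)^2) := by
    have := nr'_nonneg A; have := nr'_nonneg D
    have := Real.sqrt_nonneg ((nr' A - nr' D)^2 + (‖B‖+‖C‖)^2)
    linarith
  apply Real.sSup_le _ hR0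
  rintro r ⟨v, hv, rfl⟩
  set p := ‖v.fst‖ with hpd
  set q := ‖v.snd‖ with hqd
  have hpq : p^2 + q^2 = 1 := by
    have h1 := WithLp.prod_norm_sq_eq_of_L2 v
    rw [hv] at h1
    simpa using h1.symm
  have hinner : (inner ℂ (blk A B C D v) v : ℂ)
      = (inner ℂ (A v.fst) v.fst + inner ℂ (B v.snd) v.fst)
        + (inner ℂ (C v.fst) v.snd + inner ℂ (D v.snd) v.snd) := by
    rw [WithLp.prod_inner_apply]
    show inner ℂ (blk A B C D v).fst v.fst + inner ℂ (blk A B C D v).snd v.snd = _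
    rw [blk_apply_fst, blk_apply_snd, inner_add_left, inner_add_left]
  have hb1 : ‖(inner ℂ (B v.snd) v.fst : ℂ)‖ ≤ ‖B‖ * q * p := by
    calc ‖(inner ℂ (B v.snd) v.fst : ℂ)‖ ≤ ‖B v.snd‖ * ‖v.fst‖ := norm_inner_le_norm _ _
      _ ≤ ‖B‖ * ‖v.snd‖ * ‖v.fst‖ := by gcongr; exact B.le_opNorm _
      _ = ‖B‖ * q * p := rfl
  have hc1 : ‖(inner ℂ (C v.fst) v.snd : ℂ)‖ ≤ ‖C‖ * p * q := by
    calc ‖(inner ℂ (C v.fst) v.snd : ℂ)‖ ≤ ‖C v.fst‖ * ‖v.snd‖ := norm_inner_le_norm _ _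
      _ ≤ ‖C‖ * ‖v.fst‖ * ‖v.snd‖ := by gcongr; exact C.le_opNorm _
      _ = ‖C‖ * p * q := rfl
  have ha1 : ‖(inner ℂ (A v.fst) v.fst : ℂ)‖ ≤ nr' A * p^2 := inner_le_nr' A v.fst
  have hd1 : ‖(inner ℂ (D v.snd) v.snd : ℂ)‖ ≤ nr' D * q^2 := inner_le_nr' D v.snd
  have hnorm : ‖(inner ℂ (blk A B C D v) v : ℂ)‖
      ≤ nr' A * p^2 + nr' D * q^2 + ‖B‖*q*p + ‖C‖*p*q := by
    rw [hinner]
    calc ‖((inner ℂ (A v.fst) v.fst + inner ℂ (B v.snd) v.fst)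
        + (inner ℂ (C v.fst) v.snd + inner ℂ (D v.snd) v.snd) : ℂ)‖
        ≤ ‖(inner ℂ (A v.fst) v.fst + inner ℂ (B v.snd) v.fst : ℂ)‖
          + ‖(inner ℂ (C v.fst) v.snd + inner ℂ (D v.snd) v.snd : ℂ)‖ := norm_add_le _ _
      _ ≤ (‖(inner ℂ (A v.fst) v.fst : ℂ)‖ + ‖(inner ℂ (B v.snd) v.fst : ℂ)‖)
          + (‖(inner ℂ (C v.fst) v.snd : ℂ)‖ + ‖(inner ℂ (D v.snd) v.snd : ℂ)‖) :=
            add_le_add (norm_add_le _ _) (norm_add_le _ _)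
      _ ≤ nr' A * p^2 + nr' D * q^2 + ‖B‖*q*p + ‖C‖*p*q := by linarith
  exact hnorm.trans (real_opt (nr'_nonneg A) (nr'_nonneg D) (norm_nonneg B)
    (norm_nonneg C) (norm_nonneg _) (norm_nonneg _) hpq)

lemma core (X Y S T : H →L[ℂ] H) :
    (spectralRadius ℂ (X * Y + S * T)).toReal ≤
      (nr' (Y*X) + nr' (T*S))/2
      + (1/2)*Real.sqrt ((nr' (Y*X) - nr' (T*S))^2 + (‖Y*S‖+‖T*X‖)^2) := by
  set R0 := (nr' (Y*X) + nr' (T*S))/2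
      + (1/2)*Real.sqrt ((nr' (Y*X) - nr' (T*S))^2 + (‖Y*S‖+‖T*X‖)^2) with hR0d
  have hR0 : 0 ≤ R0 := by
    have := nr'_nonneg (Y*X); have := nr'_nonneg (T*S)
    have := Real.sqrt_nonneg ((nr' (Y*X) - nr' (T*S))^2 + (‖Y*S‖+‖T*X‖)^2)
    rw [hR0d]; linarith
  have hbound : ∀ lam ∈ spectrum ℂ (X * Y + S * T), ‖lam‖ ≤ R0 := by
    intro lam hlam
    rcases eq_or_ne lam 0 with rfl | hne
    · simpa using hR0
    · have h1 : lam ∈ spectrum ℂ (blk (X*Y+S*T) 0 0 0) := spectrum_blk hlam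
      rw [← UV_eq] at h1
      have h2 : lam ∈ spectrum ℂ (blk Y 0 T 0 * blk X S 0 0) := by
        have := (spectrum.unit_mem_mul_comm
          (r := Units.mk0 lam hne) (a := blk X S 0 0) (b := blk Y 0 T 0)).mp
        exact this h1
      rw [VU_eq] at h2
      calc ‖lam‖ ≤ nr' (blk (Y*X) (Y*S) (T*X) (T*S)) := spec_le_nr' _ h2
        _ ≤ R0 := nr'_blk_le _ _ _ _
  have hsr : spectralRadius ℂ (X * Y + S * T) ≤ ENNReal.ofReal R0 := by
    rw [spectralRadius]
    refine iSup₂_le fun k hk => ?_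
    rw [← enorm_eq_nnnorm, ← ofReal_norm]
    exact ENNReal.ofReal_le_ofReal (hbound k hk)
  calc (spectralRadius ℂ (X * Y + S * T)).toReal
      ≤ (ENNReal.ofReal R0).toReal := ENNReal.toReal_mono ENNReal.ofReal_ne_top hsr
    _ = R0 := ENNReal.toReal_ofReal hR0

theorem stmt_4 (X Y S T : H →L[ℂ] H) :
    (spectralRadius ℂ (X * Y + S * T)).toReal ≤
      (1 / 2) * (nrad (Y * X) + nrad (T * S))
      + (1 / 2) * Real.sqrt ((nrad (Y * X) - nrad (T * S)) ^ 2
          + 4 * ‖Y * S‖ * ‖T * X‖) := by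
  
  set a := nrad (Y * X) with had
  set d := nrad (T * S) with hdd
  set b := ‖Y * S‖ with hbd
  set c := ‖T * X‖ with hcd
  have hna : a = nr' (Y * X) := rfl
  have hnd : d = nr' (T * S) := rfl
  have hb0 : 0 ≤ b := norm_nonneg _
  have hc0 : 0 ≤ c := norm_nonneg _
  apply le_of_forall_pos_le_add
  intro δ hδ
  set ε := min 1 (δ^2/(b+c+1)) with hεd
  have hε : 0 < ε := lt_min one_pos (by positivity)
  have hbε : 0 < b + ε := by linarith
  have hcε : 0 < c + ε := by linarith
  set t := Real.sqrt ((c+ε)/(b+ε)) with htd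
  have ht : 0 < t := Real.sqrt_pos.mpr (by positivity)
  set u : ℂ := (t : ℂ) with hud
  have hu0 : u ≠ 0 := by
    simp only [hud, ne_eq, Complex.ofReal_eq_zero]
    exact ht.ne'
  have hXY : X * Y + (u • S) * (u⁻¹ • T) = X * Y + S * T := by
    rw [smul_mul_assoc, mul_smul_comm, smul_smul, mul_inv_cancel₀ hu0, one_smul]
  have hTS : (u⁻¹ • T) * (u • S) = T * S := by
    rw [smul_mul_assoc, mul_smul_comm, smul_smul, inv_mul_cancel₀ hu0, one_smul]
  have hYS : ‖Y * (u • S)‖ = t * b := by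
    rw [mul_smul_comm, norm_smul, hud, Complex.norm_real, Real.norm_eq_abs, abs_of_pos ht, hbd]
  have hTX : ‖(u⁻¹ • T) * X‖ = t⁻¹ * c := by
    rw [smul_mul_assoc, norm_smul, norm_inv, hud, Complex.norm_real, Real.norm_eq_abs,
      abs_of_pos ht, hcd]
  have hcore := core X Y (u • S) (u⁻¹ • T)
  rw [hXY, hTS, hYS, hTX] at hcore
  set sb := Real.sqrt (b+ε) with hsbd
  set sc := Real.sqrt (c+ε) with hscd
  have hsb : 0 < sb := Real.sqrt_pos.mpr hbε
  have hsc : 0 < sc := Real.sqrt_pos.mpr hcε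
  have hsb2 : sb^2 = b+ε := Real.sq_sqrt hbε.le
  have hsc2 : sc^2 = c+ε := Real.sq_sqrt hcε.le
  have ht_eq : t = sc / sb := by
    rw [htd, Real.sqrt_div hcε.le, hsbd, hscd]
  have hbe : b+ε = sb*sb := by rw [← hsb2]; ring
  have hce : c+ε = sc*sc := by rw [← hsc2]; ring
  have h1 : t * (b+ε) = sb * sc := by
    rw [ht_eq, hbe]
    field_simp
  have h2 : t⁻¹ * (c+ε) = sb * sc := by
    rw [ht_eq, inv_div, hce]
    field_simp
  have hsum : t * b + t⁻¹ * c ≤ 2 * (sb * sc) := by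
    have hi : 0 < t⁻¹ := inv_pos.mpr ht
    have e1 : t * b ≤ t * (b+ε) := mul_le_mul_of_nonneg_left (by linarith) ht.le
    have e2 : t⁻¹ * c ≤ t⁻¹ * (c+ε) := mul_le_mul_of_nonneg_left (by linarith) hi.le
    linarith [h1, h2]
  have hsum0 : 0 ≤ t * b + t⁻¹ * c := by positivity
  have hsq : (t * b + t⁻¹ * c)^2 ≤ 4 * (b+ε) * (c+ε) := by
    have := pow_le_pow_left₀ hsum0 hsum 2
    have e : (2 * (sb * sc))^2 = 4 * (sb*sb) * (sc*sc) := by ring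
    rw [e, ← hbe, ← hce] at this
    exact this
  have hstep1 : Real.sqrt ((a - d)^2 + (t*b + t⁻¹*c)^2)
      ≤ Real.sqrt (((a - d)^2 + 4 * b * c) + (4*b*ε + 4*c*ε + 4*ε^2)) := by
    apply Real.sqrt_le_sqrt
    have e : 4 * (b+ε) * (c+ε) = 4 * b * c + (4*b*ε + 4*c*ε + 4*ε^2) := by ring
    rw [e] at hsq
    linarith [hsq]
  have hstep2 : Real.sqrt (((a - d)^2 + 4 * b * c) + (4*b*ε + 4*c*ε + 4*ε^2))
      ≤ Real.sqrt ((a - d)^2 + 4 * b * c) + Real.sqrt (4*b*ε + 4*c*ε + 4*ε^2) := by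
    apply sqrt_add_le'
    · have : 0 ≤ 4 * b * c := by positivity
      nlinarith [sq_nonneg (a - d)]
    · positivity
  have hstep3 : Real.sqrt (4*b*ε + 4*c*ε + 4*ε^2) ≤ 2*δ := by
    have hε1 : ε ≤ 1 := min_le_left _ _
    have hε2 : ε ≤ δ^2/(b+c+1) := min_le_right _ _
    have key : 4*b*ε + 4*c*ε + 4*ε^2 ≤ (2*δ)^2 := by
      have h3 : ε * (b+c+1) ≤ δ^2 := by
        rw [le_div_iff₀ (by positivity : (0:ℝ) < b+c+1)] at hε2
        exact hε2
      have h5 : ε^2 ≤ ε := by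
        have := mul_le_mul_of_nonneg_left hε1 hε.le
        simpa [pow_two] using this
      have h6 : ε*(b+c+1) = ε*b + ε*c + ε := by ring
      rw [h6] at h3
      have h7 : (2*δ)^2 = 4*δ^2 := by ring
      rw [h7]
      linarith [h3, h5]
    have := Real.sqrt_le_sqrt key
    rwa [Real.sqrt_sq (by positivity)] at this
  calc (spectralRadius ℂ (X * Y + S * T)).toReal
      ≤ (nr' (Y*X) + nr' (T*S))/2
        + (1/2)*Real.sqrt ((nr' (Y*X) - nr' (T*S))^2 + (t*b + t⁻¹*c)^2) := hcore
    _ = (a + d)/2 + (1/2)*Real.sqrt ((a - d)^2 + (t*b + t⁻¹*c)^2) := by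
        rw [hna, hnd]
    _ ≤ (a + d)/2 + (1/2)*(Real.sqrt ((a - d)^2 + 4 * b * c) + 2*δ) := by
        have := (hstep1.trans hstep2)
        linarith [hstep3]
    _ ≤ 1 / 2 * (a + d) + 1 / 2 * Real.sqrt ((a - d)^2 + 4 * b * c) + δ := by
        linarith
end
end

section
/- For positive bounded operators A, B on a complex Hilbert space and r ≥ 1, ‖A^{1/2} B^{1/2}‖^r = r(AB)^{r/2}, where r(·) denotes the spectral radius; in particular ‖A^{1/2}B^{1/2}‖² = r(AB). -/
noncomputable section
open ContinuousLinearMap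

variable {H : Type*} [NormedAddCommGroup H] [InnerProductSpace ℂ H] [CompleteSpace H]

lemma sr_diff {A : Type*} [NormedRing A] [NormedAlgebra ℂ A] (a : A) :
    spectralRadius ℂ a = ⨆ k ∈ spectrum ℂ a \ {0}, (‖k‖₊ : ENNReal) := by
  rw [spectralRadius]
  apply le_antisymm
  · refine iSup₂_le fun k hk => ?_
    rcases eq_or_ne k 0 with rfl | h
    · simp
    · exact le_iSup₂ (f := fun k (_ : k ∈ spectrum ℂ a \ {0}) => (‖k‖₊ : ENNReal)) k ⟨hk, h⟩
  · exact iSup₂_le fun k hk =>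
      le_iSup₂ (f := fun k (_ : k ∈ spectrum ℂ a) => (‖k‖₊ : ENNReal)) k hk.1

lemma sr_mul_comm {A : Type*} [NormedRing A] [NormedAlgebra ℂ A] (a b : A) :
    spectralRadius ℂ (a * b) = spectralRadius ℂ (b * a) := by
  rw [sr_diff, sr_diff, spectrum.nonzero_mul_comm]

lemma contHalf : Continuous fun x : ℝ => x ^ (1 / 2 : ℝ) :=
  continuous_iff_continuousAt.mpr fun x =>
    Real.continuousAt_rpow_const x _ (Or.inr (by norm_num))

lemma key_sq (A B : H →L[ℂ] H) (hA : A.IsPositive) (hB : B.IsPositive) :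
    ‖cfc (fun x : ℝ => x ^ (1 / 2 : ℝ)) A * cfc (fun x : ℝ => x ^ (1 / 2 : ℝ)) B‖ ^ (2 : ℕ)
        = (spectralRadius ℂ (A * B)).toReal := by
  set S := cfc (fun x : ℝ => x ^ (1 / 2 : ℝ)) A with hS
  set T := cfc (fun x : ℝ => x ^ (1 / 2 : ℝ)) B with hT
  have hA' : 0 ≤ A := (A.nonneg_iff_isPositive).mpr hA
  have hB' : 0 ≤ B := (B.nonneg_iff_isPositive).mpr hB
  have hSsa : IsSelfAdjoint S := cfc_predicate _ A
  have hTsa : IsSelfAdjoint T := cfc_predicate _ B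
  have hSS : S * S = A := by
    rw [hS, ← cfc_mul _ _ _ contHalf.continuousOn contHalf.continuousOn]
    conv_rhs => rw [← cfc_id ℝ A]
    apply cfc_congr
    intro x hx
    have hx0 : (0:ℝ) ≤ x := spectrum_nonneg_of_nonneg hA' hx
    show x ^ (1/2:ℝ) * x ^ (1/2:ℝ) = x
    rw [← Real.rpow_add' hx0 (by norm_num : (1/2:ℝ) + 1/2 ≠ 0)]
    norm_num
  have hTT : T * T = B := by
    rw [hT, ← cfc_mul _ _ _ contHalf.continuousOn contHalf.continuousOn]
    conv_rhs => rw [← cfc_id ℝ B]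
    apply cfc_congr
    intro x hx
    have hx0 : (0:ℝ) ≤ x := spectrum_nonneg_of_nonneg hB' hx
    show x ^ (1/2:ℝ) * x ^ (1/2:ℝ) = x
    rw [← Real.rpow_add' hx0 (by norm_num : (1/2:ℝ) + 1/2 ≠ 0)]
    norm_num
  have hTAT : IsSelfAdjoint (T * A * T) := by
    have := hA.isSelfAdjoint
    rw [IsSelfAdjoint, star_mul, star_mul, hTsa.star_eq, this.star_eq, mul_assoc]
  have key : spectralRadius ℂ (T * A * T) = spectralRadius ℂ (A * B) := by
    rw [mul_assoc, sr_mul_comm, mul_assoc, hTT]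
  have h1 : ‖S * T‖ ^ (2:ℕ) = ‖T * A * T‖ := by
    rw [sq, ← CStarRing.norm_star_mul_self (x := S * T), star_mul, hSsa.star_eq, hTsa.star_eq]
    congr 1
    rw [← hSS]; noncomm_ring
  rw [h1, ← key, hTAT.spectralRadius_eq_nnnorm]
  simp

theorem stmt_10 (A B : H →L[ℂ] H) (hA : A.IsPositive) (hB : B.IsPositive)
    (r : ℝ) (hr : 1 ≤ r) :
    ‖cfc (fun x : ℝ => x ^ (1 / 2 : ℝ)) A * cfc (fun x : ℝ => x ^ (1 / 2 : ℝ)) B‖ ^ r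
        = (spectralRadius ℂ (A * B)).toReal ^ (r / 2) ∧
      ‖cfc (fun x : ℝ => x ^ (1 / 2 : ℝ)) A * cfc (fun x : ℝ => x ^ (1 / 2 : ℝ)) B‖ ^ (2 : ℝ)
        = (spectralRadius ℂ (A * B)).toReal := by
  have h := key_sq A B hA hB
  set x := ‖cfc (fun x : ℝ => x ^ (1 / 2 : ℝ)) A * cfc (fun x : ℝ => x ^ (1 / 2 : ℝ)) B‖ with hx
  have hx0 : 0 ≤ x := norm_nonneg _
  have h2 : x ^ (2:ℝ) = (spectralRadius ℂ (A * B)).toReal := by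
    rw [show (2:ℝ) = ((2:ℕ) : ℝ) by norm_num, Real.rpow_natCast, h]
  refine ⟨?_, h2⟩
  rw [← h2, ← Real.rpow_mul hx0, mul_div_cancel₀ r (by norm_num : (2:ℝ) ≠ 0)]
end
end

section
/- Let A, B be normal bounded operators on a complex Hilbert space and r ≥ 1. Then ‖A + B‖^r ≤ 2^{r−1}·max(‖A‖^r, ‖B‖^r) + 2^{r−1}·‖AB‖^{r/2}. -/
noncomputable section
open ContinuousLinearMap

variable {H : Type*} [NormedAddCommGroup H] [InnerProductSpace ℂ H] [CompleteSpace H]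

set_option linter.unusedSectionVars false

def sqf : ℂ → ℂ := fun z => ((Real.sqrt ‖z‖ : ℝ) : ℂ)
def gf : ℂ → ℂ := fun z => z / sqf z
def absf : ℂ → ℂ := fun z => ((‖z‖ : ℝ) : ℂ)

lemma cont_sqf : Continuous sqf := by unfold sqf; fun_prop

lemma cont_absf : Continuous absf := by unfold absf; fun_prop

lemma norm_gf (z : ℂ) : ‖gf z‖ = Real.sqrt ‖z‖ := by
  by_cases hz : z = 0
  · simp [hz, gf, sqf]
  · have h0 : (0:ℝ) < Real.sqrt ‖z‖ := Real.sqrt_pos.mpr (norm_pos_iff.mpr hz)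
    rw [gf, norm_div, sqf, Complex.norm_real, Real.norm_of_nonneg (Real.sqrt_nonneg _),
      Real.div_sqrt]

lemma cont_gf : Continuous gf := by
  rw [continuous_iff_continuousAt]
  intro z
  by_cases hz : z = 0
  · subst hz
    rw [ContinuousAt, Metric.tendsto_nhds_nhds]
    intro ε hε
    refine ⟨ε ^ 2, by positivity, fun {w} hw => ?_⟩
    simp only [dist_zero_right] at hw ⊢
    have : gf 0 = 0 := by simp [gf, sqf]
    rw [this, dist_zero_right, norm_gf]
    calc Real.sqrt ‖w‖ < Real.sqrt (ε ^ 2) := Real.sqrt_lt_sqrt (norm_nonneg _) hw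
    _ = ε := Real.sqrt_sq hε.le
  · have h0 : sqf z ≠ 0 := by
      simp only [sqf, ne_eq, Complex.ofReal_eq_zero]
      exact ne_of_gt (Real.sqrt_pos.mpr (norm_pos_iff.mpr hz))
    exact ContinuousAt.div continuousAt_id (cont_sqf.continuousAt) h0

lemma sqf_ne_zero {z : ℂ} (hz : z ≠ 0) : sqf z ≠ 0 := by
  simp only [sqf, ne_eq, Complex.ofReal_eq_zero]
  exact ne_of_gt (Real.sqrt_pos.mpr (norm_pos_iff.mpr hz))

section ops
variable (A : H →L[ℂ] H) [IsStarNormal A]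

lemma gf_mul_sqf : cfc gf A * cfc sqf A = A := by
  rw [← cfc_mul gf sqf A cont_gf.continuousOn cont_sqf.continuousOn]
  have h : (fun z => gf z * sqf z) = fun z : ℂ => z := by
    funext z
    by_cases hz : z = 0
    · simp [hz, gf, sqf]
    · exact div_mul_cancel₀ z (sqf_ne_zero hz)
  rw [h, cfc_id' ℂ A]

lemma sqf_mul_sqf : cfc sqf A * cfc sqf A = cfc absf A := by
  rw [← cfc_mul sqf sqf A cont_sqf.continuousOn cont_sqf.continuousOn]
  congr 1
  funext z
  simp only [sqf, absf, ← Complex.ofReal_mul, Real.mul_self_sqrt (norm_nonneg z)]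

lemma sa_sqf : IsSelfAdjoint (cfc sqf A) := by
  rw [IsSelfAdjoint, ← cfc_star]
  congr 1
  funext z
  rw [RCLike.star_def, sqf, Complex.conj_ofReal]

lemma sa_absf : IsSelfAdjoint (cfc absf A) := by
  rw [IsSelfAdjoint, ← cfc_star]
  congr 1
  funext z
  rw [RCLike.star_def, absf, Complex.conj_ofReal]

lemma gf_mul_star_gf : cfc gf A * star (cfc gf A) = cfc absf A := by
  rw [← cfc_star, ← cfc_mul gf (fun z => star (gf z)) A cont_gf.continuousOn (continuous_star.comp cont_gf).continuousOn]
  congr 1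
  funext z
  by_cases hz : z = 0
  · simp [hz, gf, sqf, absf]
  · simp only [gf, sqf, absf, RCLike.star_def, map_div₀, Complex.conj_ofReal]
    rw [div_mul_div_comm, Complex.mul_conj']
    rw [← Complex.ofReal_mul, Real.mul_self_sqrt (norm_nonneg z)]
    rw [div_eq_iff (by simpa [Complex.ofReal_eq_zero] using (norm_pos_iff.mpr hz).ne')]
    norm_cast
    rw [sq]

lemma absf_mul_absf : cfc absf A * cfc absf A = star A * A := by
  rw [← cfc_mul absf absf A cont_absf.continuousOn cont_absf.continuousOn]
  have h : (fun z => absf z * absf z) = fun z : ℂ => star z * z := by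
    funext z
    rw [RCLike.star_def, mul_comm ((starRingEnd ℂ) z) z, Complex.mul_conj']
    simp only [absf, ← Complex.ofReal_mul]
    norm_cast
    rw [sq]
  rw [h, cfc_mul (fun z : ℂ => star z) (fun z : ℂ => z) A continuous_star.continuousOn
    continuous_id.continuousOn, cfc_star (fun z : ℂ => z) A, cfc_id' ℂ A]
end ops

section norms
variable {A : H →L[ℂ] H}

lemma ptnorm (T : H →L[ℂ] H) (v : H) : ‖T v‖ ^ 2 = Complex.re (inner ℂ ((star T * T) v) v : ℂ) := by
  have : ((star T * T) v) = adjoint T (T v) := by rw [star_eq_adjoint]; rfl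
  rw [this, adjoint_inner_left]
  exact (inner_self_eq_norm_sq (𝕜 := ℂ) (T v)).symm

lemma norm_eq_of_ptnorm {P Q : H →L[ℂ] H} (h : ∀ v, ‖P v‖ = ‖Q v‖) : ‖P‖ = ‖Q‖ := by
  apply le_antisymm
  · exact opNorm_le_bound _ (norm_nonneg Q) (fun v => (h v).le.trans (le_opNorm Q v))
  · exact opNorm_le_bound _ (norm_nonneg P) (fun v => (h v).ge.trans (le_opNorm P v))
end norms

section normal
variable (A : H →L[ℂ] H) [IsStarNormal A]

lemma sq_norms {a b : ℝ} (ha : 0 ≤ a) (hb : 0 ≤ b) (h : a ^ 2 = b ^ 2) : a = b := by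
  have := congrArg Real.sqrt h
  rwa [Real.sqrt_sq ha, Real.sqrt_sq hb] at this

lemma ptnorm_star (v : H) : ‖star A v‖ = ‖A v‖ := by
  apply sq_norms (norm_nonneg _) (norm_nonneg _)
  rw [ptnorm (star A) v, ptnorm A v, star_star,
    (‹IsStarNormal A›.star_comm_self).eq]

lemma ptnorm_abs (v : H) : ‖cfc absf A v‖ = ‖A v‖ := by
  apply sq_norms (norm_nonneg _) (norm_nonneg _)
  rw [ptnorm (cfc absf A) v, ptnorm A v, (sa_absf A).star_eq, absf_mul_absf A]

lemma norm_absA : ‖cfc absf A‖ = ‖A‖ := norm_eq_of_ptnorm (ptnorm_abs A)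

lemma re_abs_inner (x : H) :
    Complex.re (inner ℂ (cfc absf A x) x : ℂ) = ‖cfc sqf A x‖ ^ 2 := by
  rw [ptnorm (cfc sqf A) x, (sa_sqf A).star_eq, sqf_mul_sqf A]

/-- left absorption: ‖|A| ∘ C‖ = ‖A ∘ C‖ -/
lemma norm_abs_mul (C : H →L[ℂ] H) : ‖cfc absf A * C‖ = ‖A * C‖ :=
  norm_eq_of_ptnorm (fun v => by rw [mul_apply_eq_comp, mul_apply_eq_comp, ptnorm_abs])

lemma norm_star_mul (C : H →L[ℂ] H) : ‖star A * C‖ = ‖A * C‖ :=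
  norm_eq_of_ptnorm (fun v => by rw [mul_apply_eq_comp, mul_apply_eq_comp, ptnorm_star])

/-- right absorption: ‖C ∘ |A|‖ = ‖C ∘ A‖ -/
lemma norm_mul_abs (C : H →L[ℂ] H) : ‖C * cfc absf A‖ = ‖C * A‖ := by
  rw [← norm_star (C * cfc absf A), ← norm_star (C * A), star_mul, star_mul,
    (sa_absf A).star_eq, norm_abs_mul A, ← norm_star_mul A]

end normal

lemma norm_mul_comm (A B : H →L[ℂ] H) [IsStarNormal A] [IsStarNormal B] :
    ‖B * A‖ = ‖A * B‖ := by
  rw [← norm_star_mul B A, ← norm_star (star B * A), star_mul, star_star, ← norm_star_mul A B]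

section spec
open scoped ENNReal NNReal

lemma spectralRadius_mul_comm {𝓐 : Type*} [NormedRing 𝓐] [NormedAlgebra ℂ 𝓐] (a b : 𝓐) :
    spectralRadius ℂ (a * b) = spectralRadius ℂ (b * a) := by
  have key : ∀ x y : 𝓐, spectralRadius ℂ (x * y) ≤ spectralRadius ℂ (y * x) := by
    intro x y
    rw [spectralRadius, spectralRadius]
    apply iSup₂_le
    intro k hk
    by_cases h0 : k = 0
    · simp [h0]
    · have hmem : k ∈ spectrum ℂ (y * x) := by
        have heq := spectrum.nonzero_mul_comm (𝕜 := ℂ) x y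
        have hk' : k ∈ spectrum ℂ (x * y) \ {0} := ⟨hk, h0⟩
        rw [heq] at hk'
        exact hk'.1
      exact le_iSup₂ (f := fun k (_ : k ∈ spectrum ℂ (y * x)) => (‖k‖₊ : ℝ≥0∞)) k hmem
  exact le_antisymm (key a b) (key b a)

variable (A B : H →L[ℂ] H) [IsStarNormal A] [IsStarNormal B]

lemma norm_XY_sq : ‖cfc sqf A * cfc sqf B‖ ^ 2 ≤ ‖A * B‖ := by
  rcases subsingleton_or_nontrivial H with hs | hn
  · have h0 : cfc sqf A * cfc sqf B = 0 := by
      ext v; exact Subsingleton.elim _ _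
    rw [h0, norm_zero]
    simpa using norm_nonneg (A * B)
  set X := cfc sqf A with hX
  set Y := cfc sqf B with hY
  have h1 : ‖X * Y‖ ^ 2 = ‖star (X * Y) * (X * Y)‖ := by
    rw [CStarRing.norm_star_mul_self, sq]
  have hZ : star (X * Y) * (X * Y) = (Y * cfc absf A) * Y := by
    rw [star_mul, (sa_sqf A).star_eq, (sa_sqf B).star_eq, ← hX, ← hY]
    rw [show Y * X * (X * Y) = Y * (X * X) * Y by noncomm_ring, sqf_mul_sqf A]
  have hsa : IsSelfAdjoint ((Y * cfc absf A) * Y) := by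
    rw [← hZ]
    exact IsSelfAdjoint.star_mul_self (X * Y)
  have habs : ‖cfc absf B * cfc absf A‖ = ‖A * B‖ := by
    rw [norm_abs_mul B, norm_mul_abs A B, norm_mul_comm A B]
  have h2 : (‖(Y * cfc absf A) * Y‖₊ : ℝ≥0∞) ≤ (‖A * B‖₊ : ℝ≥0∞) := by
    rw [← hsa.spectralRadius_eq_nnnorm, spectralRadius_mul_comm]
    have hmul : Y * (Y * cfc absf A) = cfc absf B * cfc absf A := by
      rw [← mul_assoc, sqf_mul_sqf B]
    rw [hmul]
    refine le_trans (spectrum.spectralRadius_le_nnnorm _) ?_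
    rw [ENNReal.coe_le_coe, ← NNReal.coe_le_coe, coe_nnnorm, coe_nnnorm, habs]
  have h3 : ‖(Y * cfc absf A) * Y‖ ≤ ‖A * B‖ := by
    rw [← coe_nnnorm, ← coe_nnnorm, NNReal.coe_le_coe]
    exact ENNReal.coe_le_coe.mp h2
  rw [h1, hZ]
  exact h3
end spec

section blkstuff
variable (P Q R S : H →L[ℂ] H)

lemma blk_fst (x : WithLp 2 (H × H)) : (blk P Q R S x).fst = P x.fst + Q x.snd := rfl
lemma blk_snd (x : WithLp 2 (H × H)) : (blk P Q R S x).snd = R x.fst + S x.snd := rfl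

lemma blk_ext_s12 {M N : WithLp 2 (H × H) →L[ℂ] WithLp 2 (H × H)}
    (h1 : ∀ x, (M x).fst = (N x).fst) (h2 : ∀ x, (M x).snd = (N x).snd) : M = N := by
  ext x
  exact WithLp.ofLp_injective 2 (Prod.ext (h1 x) (h2 x))

lemma blk_split : blk P Q R S = blk P 0 0 S + blk 0 Q R 0 := by
  apply blk_ext_s12 <;> intro x <;>
    simp [blk_fst, blk_snd, ContinuousLinearMap.add_apply] <;> abel

lemma le_of_sq_le_sq' {a b : ℝ} (ha : 0 ≤ a) (hb : 0 ≤ b) (h : a ^ 2 ≤ b ^ 2) : a ≤ b := by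
  have := Real.sqrt_le_sqrt h
  rwa [Real.sqrt_sq ha, Real.sqrt_sq hb] at this

lemma norm_blk_diag : ‖blk P 0 0 S‖ ≤ max ‖P‖ ‖S‖ := by
  apply opNorm_le_bound _ (le_max_iff.mpr (Or.inl (norm_nonneg P)))
  intro x
  apply le_of_sq_le_sq' (norm_nonneg _) (by positivity)
  rw [WithLp.prod_norm_sq_eq_of_L2, mul_pow, WithLp.prod_norm_sq_eq_of_L2,
    blk_fst, blk_snd]
  simp only [zero_apply, add_zero, zero_add]
  have h1 : ‖P x.fst‖ ≤ max ‖P‖ ‖S‖ * ‖x.fst‖ :=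
    (le_opNorm P x.fst).trans (by gcongr; exact le_max_left _ _)
  have h2 : ‖S x.snd‖ ≤ max ‖P‖ ‖S‖ * ‖x.snd‖ :=
    (le_opNorm S x.snd).trans (by gcongr; exact le_max_right _ _)
  have hm : (0:ℝ) ≤ max ‖P‖ ‖S‖ := le_max_iff.mpr (Or.inl (norm_nonneg P))
  nlinarith [norm_nonneg (P x.fst), norm_nonneg (S x.snd), norm_nonneg x.fst, norm_nonneg x.snd]

lemma norm_blk_anti : ‖blk 0 Q R 0‖ ≤ max ‖Q‖ ‖R‖ := by
  apply opNorm_le_bound _ (le_max_iff.mpr (Or.inl (norm_nonneg Q)))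
  intro x
  apply le_of_sq_le_sq' (norm_nonneg _) (by positivity)
  rw [WithLp.prod_norm_sq_eq_of_L2, mul_pow, WithLp.prod_norm_sq_eq_of_L2,
    blk_fst, blk_snd]
  simp only [zero_apply, add_zero, zero_add]
  have h1 : ‖Q x.snd‖ ≤ max ‖Q‖ ‖R‖ * ‖x.snd‖ :=
    (le_opNorm Q x.snd).trans (by gcongr; exact le_max_left _ _)
  have h2 : ‖R x.fst‖ ≤ max ‖Q‖ ‖R‖ * ‖x.fst‖ :=
    (le_opNorm R x.fst).trans (by gcongr; exact le_max_right _ _)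
  have hm : (0:ℝ) ≤ max ‖Q‖ ‖R‖ := le_max_iff.mpr (Or.inl (norm_nonneg Q))
  nlinarith [norm_nonneg (Q x.snd), norm_nonneg (R x.fst), norm_nonneg x.fst, norm_nonneg x.snd]

lemma norm_blk_corner (T : H →L[ℂ] H) : ‖blk T 0 0 0‖ = ‖T‖ := by
  apply le_antisymm
  · have h := norm_blk_diag T 0
    rwa [norm_zero, max_eq_left (norm_nonneg T)] at h
  · apply opNorm_le_bound _ (norm_nonneg _)
    intro v
    have h1 : T v = (blk T 0 0 0 ((WithLp.equiv 2 (H × H)).symm (v, 0))).fst := by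
      simp [blk_fst]
    rw [h1]
    calc ‖(blk T 0 0 0 ((WithLp.equiv 2 (H × H)).symm (v, 0))).fst‖
        ≤ ‖blk T 0 0 0 ((WithLp.equiv 2 (H × H)).symm (v, 0))‖ := by
          apply le_of_sq_le_sq' (norm_nonneg _) (norm_nonneg _)
          rw [WithLp.prod_norm_sq_eq_of_L2]
          nlinarith [norm_nonneg (blk T 0 0 0 ((WithLp.equiv 2 (H × H)).symm (v, 0))).snd]
      _ ≤ ‖blk T 0 0 0‖ * ‖(WithLp.equiv 2 (H × H)).symm (v, 0)‖ := le_opNorm _ _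
      _ = ‖blk T 0 0 0‖ * ‖v‖ := by rw [WithLp.equiv_symm_apply, WithLp.norm_toLp_fst]
end blkstuff

section blkadj
variable {X Y : H →L[ℂ] H}

lemma blk_adjoint (hX : IsSelfAdjoint X) (hY : IsSelfAdjoint Y) :
    blk X Y 0 0 = adjoint (blk X 0 Y 0) := by
  rw [eq_adjoint_iff]
  intro x y
  have hXi : ∀ u v : H, (inner ℂ (X u) v : ℂ) = inner ℂ u (X v) := fun u v => by
    conv_lhs => rw [← hX.adjoint_eq]
    exact adjoint_inner_left X v u
  have hYi : ∀ u v : H, (inner ℂ (Y u) v : ℂ) = inner ℂ u (Y v) := fun u v => by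
    conv_lhs => rw [← hY.adjoint_eq]
    exact adjoint_inner_left Y v u
  rw [WithLp.prod_inner_apply, WithLp.prod_inner_apply]
  change inner ℂ (blk X Y 0 0 x).fst y.fst + inner ℂ (blk X Y 0 0 x).snd y.snd
    = inner ℂ x.fst (blk X 0 Y 0 y).fst + inner ℂ x.snd (blk X 0 Y 0 y).snd
  rw [blk_fst, blk_snd, blk_fst, blk_snd]
  simp only [zero_apply, add_zero, zero_add, inner_add_left, inner_zero_left]
  rw [hXi, hYi]

lemma blk_comp1 : blk X Y 0 0 * blk X 0 Y 0 = blk (X * X + Y * Y) 0 0 0 := by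
  apply blk_ext_s12 <;> intro x <;>
    simp [blk_fst, blk_snd, mul_apply]

lemma blk_comp2 : blk X 0 Y 0 * blk X Y 0 0 = blk (X * X) (X * Y) (Y * X) (Y * Y) := by
  apply blk_ext_s12 <;> intro x <;>
    simp [blk_fst, blk_snd, mul_apply]
end blkadj

lemma norm_abs_add_abs (A B : H →L[ℂ] H) [IsStarNormal A] [IsStarNormal B] :
    ‖cfc absf A + cfc absf B‖ ≤ max ‖A‖ ‖B‖ + ‖cfc sqf A * cfc sqf B‖ := by
  set X := cfc sqf A with hX
  set Y := cfc sqf B with hY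
  set M := blk X 0 Y 0 with hM
  have hadj : blk X Y 0 0 = adjoint M := blk_adjoint (sa_sqf A) (sa_sqf B)
  have e1 : ‖cfc absf A + cfc absf B‖ = ‖adjoint M * M‖ := by
    rw [hM, ← hadj, blk_comp1, sqf_mul_sqf A, sqf_mul_sqf B, norm_blk_corner]
  have e2 : ‖adjoint M * M‖ = ‖M * adjoint M‖ := by
    rw [mul_def, mul_def, norm_adjoint_comp_self M]
    have h := norm_adjoint_comp_self (adjoint M)
    rw [adjoint_adjoint] at h
    rw [h, ← star_eq_adjoint, norm_star]
  have e3 : M * adjoint M = blk (X * X) 0 0 (Y * Y) + blk 0 (X * Y) (Y * X) 0 := by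
    rw [← hadj, hM, blk_comp2, blk_split]
  rw [e1, e2, e3]
  refine (norm_add_le _ _).trans ?_
  gcongr
  · refine (norm_blk_diag _ _).trans ?_
    rw [sqf_mul_sqf A, sqf_mul_sqf B, norm_absA A, norm_absA B]
  · refine (norm_blk_anti _ _).trans ?_
    have : ‖Y * X‖ = ‖X * Y‖ := by
      rw [← norm_star (X * Y), star_mul, (sa_sqf A).star_eq, (sa_sqf B).star_eq]
    rw [this, max_self]

lemma cs2 {a b c d : ℝ} (ha : 0 ≤ a) (hb : 0 ≤ b) (hc : 0 ≤ c) (hd : 0 ≤ d) :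
    a * c + b * d ≤ Real.sqrt (a ^ 2 + b ^ 2) * Real.sqrt (c ^ 2 + d ^ 2) := by
  rw [← Real.sqrt_mul (by positivity)]
  have h1 : a * c + b * d = Real.sqrt ((a * c + b * d) ^ 2) :=
    (Real.sqrt_sq (by positivity)).symm
  rw [h1]
  apply Real.sqrt_le_sqrt
  nlinarith [sq_nonneg (a * d - b * c)]

lemma norm_add_le_norm_abs (A B : H →L[ℂ] H) [IsStarNormal A] [IsStarNormal B] :
    ‖A + B‖ ≤ ‖cfc absf A + cfc absf B‖ := by
  set T := cfc absf A + cfc absf B with hT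
  set t := ‖T‖ with ht
  have ht0 : 0 ≤ t := norm_nonneg T
  apply opNorm_le_bound _ ht0
  intro v
  set w := (A + B) v with hw
  -- key quadratic-form bounds
  have habs : ∀ u : H, ‖cfc sqf A u‖ ^ 2 + ‖cfc sqf B u‖ ^ 2 ≤ t * ‖u‖ ^ 2 := by
    intro u
    have h1 : ‖cfc sqf A u‖ ^ 2 + ‖cfc sqf B u‖ ^ 2 = Complex.re (inner ℂ (T u) u : ℂ) := by
      rw [hT, ContinuousLinearMap.add_apply, inner_add_left, Complex.add_re,
        re_abs_inner A u, re_abs_inner B u]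
    rw [h1]
    calc Complex.re (inner ℂ (T u) u : ℂ) ≤ ‖(inner ℂ (T u) u : ℂ)‖ := Complex.re_le_norm _
      _ ≤ ‖T u‖ * ‖u‖ := norm_inner_le_norm _ _
      _ ≤ t * ‖u‖ * ‖u‖ := by gcongr; exact le_opNorm T u
      _ = t * ‖u‖ ^ 2 := by ring
  have hstar : ∀ u : H,
      ‖star (cfc gf A) u‖ ^ 2 + ‖star (cfc gf B) u‖ ^ 2 ≤ t * ‖u‖ ^ 2 := by
    intro u
    have h1 : ‖star (cfc gf A) u‖ ^ 2 = Complex.re (inner ℂ (cfc absf A u) u : ℂ) := by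
      rw [ptnorm (star (cfc gf A)) u, star_star, gf_mul_star_gf A]
    have h2 : ‖star (cfc gf B) u‖ ^ 2 = Complex.re (inner ℂ (cfc absf B u) u : ℂ) := by
      rw [ptnorm (star (cfc gf B)) u, star_star, gf_mul_star_gf B]
    rw [h1, h2, ← Complex.add_re, ← inner_add_left]
    have h3 : cfc absf A u + cfc absf B u = T u := by
      rw [hT, ContinuousLinearMap.add_apply]
    rw [h3]
    calc Complex.re (inner ℂ (T u) u : ℂ) ≤ ‖(inner ℂ (T u) u : ℂ)‖ := Complex.re_le_norm _
      _ ≤ ‖T u‖ * ‖u‖ := norm_inner_le_norm _ _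
      _ ≤ t * ‖u‖ * ‖u‖ := by gcongr; exact le_opNorm T u
      _ = t * ‖u‖ ^ 2 := by ring
  -- the inner product expansion
  have hexp : ‖w‖ ^ 2 ≤ ‖cfc sqf A v‖ * ‖star (cfc gf A) w‖
      + ‖cfc sqf B v‖ * ‖star (cfc gf B) w‖ := by
    have e0 : (‖w‖ : ℝ) ^ 2 = Complex.re (inner ℂ w w : ℂ) :=
      (inner_self_eq_norm_sq (𝕜 := ℂ) w).symm
    have e1 : (inner ℂ w w : ℂ) = inner ℂ ((A + B) v) w := by rw [← hw]
    have e2 : (A + B) v = cfc gf A (cfc sqf A v) + cfc gf B (cfc sqf B v) := by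
      conv_lhs => rw [← gf_mul_sqf A, ← gf_mul_sqf B]
      rfl
    have e3 : (inner ℂ ((A + B) v) w : ℂ)
        = inner ℂ (cfc sqf A v) (star (cfc gf A) w)
          + inner ℂ (cfc sqf B v) (star (cfc gf B) w) := by
      rw [e2, inner_add_left, star_eq_adjoint, star_eq_adjoint,
        adjoint_inner_right, adjoint_inner_right]
    calc ‖w‖ ^ 2 = Complex.re (inner ℂ ((A + B) v) w : ℂ) := by rw [e0, e1]
      _ ≤ ‖(inner ℂ (cfc sqf A v) (star (cfc gf A) w) : ℂ)‖
          + ‖(inner ℂ (cfc sqf B v) (star (cfc gf B) w) : ℂ)‖ := by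
        rw [e3]
        refine le_trans (Complex.re_le_norm _) ?_
        exact norm_add_le _ _
      _ ≤ ‖cfc sqf A v‖ * ‖star (cfc gf A) w‖ + ‖cfc sqf B v‖ * ‖star (cfc gf B) w‖ := by
        gcongr <;> exact norm_inner_le_norm _ _
  -- combine
  have hmain : ‖w‖ ^ 2 ≤ t * ‖v‖ * ‖w‖ := by
    calc ‖w‖ ^ 2 ≤ ‖cfc sqf A v‖ * ‖star (cfc gf A) w‖
        + ‖cfc sqf B v‖ * ‖star (cfc gf B) w‖ := hexp
      _ ≤ Real.sqrt (‖cfc sqf A v‖ ^ 2 + ‖cfc sqf B v‖ ^ 2)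
          * Real.sqrt (‖star (cfc gf A) w‖ ^ 2 + ‖star (cfc gf B) w‖ ^ 2) :=
        cs2 (norm_nonneg _) (norm_nonneg _) (norm_nonneg _) (norm_nonneg _)
      _ ≤ Real.sqrt (t * ‖v‖ ^ 2) * Real.sqrt (t * ‖w‖ ^ 2) := by
        gcongr
        · exact habs v
        · exact hstar w
      _ = t * ‖v‖ * ‖w‖ := by
        rw [Real.sqrt_mul ht0, Real.sqrt_mul ht0, Real.sqrt_sq (norm_nonneg v),
          Real.sqrt_sq (norm_nonneg w),
          show Real.sqrt t * ‖v‖ * (Real.sqrt t * ‖w‖)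
            = Real.sqrt t * Real.sqrt t * (‖v‖ * ‖w‖) from by ring,
          Real.mul_self_sqrt ht0]
        ring
  by_cases hw0 : ‖w‖ = 0
  · rw [hw0]; positivity
  · have hwp : 0 < ‖w‖ := lt_of_le_of_ne (norm_nonneg w) (Ne.symm hw0)
    nlinarith [hmain]

lemma add_rpow_le {a b p : ℝ} (ha : 0 ≤ a) (hb : 0 ≤ b) (hp : 1 ≤ p) :
    (a + b) ^ p ≤ 2 ^ (p - 1) * (a ^ p + b ^ p) := by
  have h := NNReal.rpow_add_le_mul_rpow_add_rpow ⟨a, ha⟩ ⟨b, hb⟩ hp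
  have := NNReal.coe_le_coe.mpr h
  push_cast [NNReal.coe_rpow] at this
  convert this using 2 <;> rfl

theorem stmt_12 (A B : H →L[ℂ] H) (hA : IsStarNormal A) (hB : IsStarNormal B)
    (r : ℝ) (hr : 1 ≤ r) :
    ‖A + B‖ ^ r ≤ (2 : ℝ) ^ (r - 1) * max (‖A‖ ^ r) (‖B‖ ^ r)
      + (2 : ℝ) ^ (r - 1) * ‖A * B‖ ^ (r / 2) := by
  haveI := hA; haveI := hB
  set M := max ‖A‖ ‖B‖ with hMdef
  set c := ‖A * B‖ with hcdef
  have hkey : ‖A + B‖ ≤ M + Real.sqrt c := by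
    refine (norm_add_le_norm_abs A B).trans ((norm_abs_add_abs A B).trans ?_)
    gcongr
    have h := Real.sqrt_le_sqrt (norm_XY_sq A B)
    rwa [Real.sqrt_sq (norm_nonneg _)] at h
  have hr0 : 0 ≤ r := le_trans zero_le_one hr
  have hM0 : 0 ≤ M := le_max_of_le_left (norm_nonneg A)
  have hc0 : (0:ℝ) ≤ c := norm_nonneg _
  have h1 : ‖A + B‖ ^ r ≤ (M + Real.sqrt c) ^ r :=
    Real.rpow_le_rpow (norm_nonneg _) hkey hr0
  have h2 : (M + Real.sqrt c) ^ r ≤ 2 ^ (r - 1) * (M ^ r + Real.sqrt c ^ r) :=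
    add_rpow_le hM0 (Real.sqrt_nonneg c) hr
  have h3 : M ^ r = max (‖A‖ ^ r) (‖B‖ ^ r) := by
    rcases le_total ‖A‖ ‖B‖ with h | h
    · rw [hMdef, max_eq_right h,
        max_eq_right (Real.rpow_le_rpow (norm_nonneg A) h hr0)]
    · rw [hMdef, max_eq_left h,
        max_eq_left (Real.rpow_le_rpow (norm_nonneg B) h hr0)]
  have h4 : Real.sqrt c ^ r = c ^ (r / 2) := by
    rw [Real.sqrt_eq_rpow, ← Real.rpow_mul hc0,
      show 1 / 2 * r = r / 2 by ring]
  calc ‖A + B‖ ^ r ≤ 2 ^ (r - 1) * (M ^ r + Real.sqrt c ^ r) := h1.trans h2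
    _ = (2:ℝ) ^ (r - 1) * max (‖A‖ ^ r) (‖B‖ ^ r) + (2:ℝ) ^ (r - 1) * c ^ (r / 2) := by
      rw [h3, h4]; ring
end
end

section
/- Let A, B be bounded linear operators on a complex Hilbert space and let f, g be non-negative non-decreasing continuous functions on [0,∞) with f(x)g(x) = x for x ≥ 0. Then ‖A + B‖ ≤ max(‖A‖, ‖B‖) + (1/2)(‖f(|B|)g(|A|)‖ + ‖f(|A*|)g(|B*|)‖). -/
set_option maxHeartbeats 1000000

noncomputable section
open ContinuousLinearMap

variable {H : Type*} [NormedAddCommGroup H] [InnerProductSpace ℂ H] [CompleteSpace H]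

/-! ### Auxiliary algebraic lemmas -/

lemma stmt16_comm_pow {A : Type*} [Semiring A] {c p q : A} (h : c * p = q * c) (n : ℕ) :
    c * p ^ n = q ^ n * c := by
  induction n with
  | zero => simp
  | succ n ih =>
    rw [pow_succ, ← mul_assoc, ih, mul_assoc, h, ← mul_assoc, ← pow_succ]

lemma stmt16_comm_aeval {A : Type*} [Ring A] [Algebra ℝ A] {c p q : A} (h : c * p = q * c)
    (P : Polynomial ℝ) :
    c * (Polynomial.aeval p P) = (Polynomial.aeval q P) * c := by
  induction P using Polynomial.induction_on with
  | C r => simp [← Algebra.commutes r c]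
  | add P Q hP hQ => rw [map_add, map_add, mul_add, add_mul, hP, hQ]
  | monomial n r ih =>
    simp only [map_mul, Polynomial.aeval_C, map_pow, Polynomial.aeval_X]
    rw [← mul_assoc, ← Algebra.commutes r c, mul_assoc, stmt16_comm_pow h, ← mul_assoc]

lemma stmt16_cs_weights {c d a1 b1 a2 b2 : ℝ} (hcd : c * d = 1) :
    (a1 * a2 + b1 * b2)^2 ≤ ((c * a1)^2 + (d * b1)^2) * ((d * a2)^2 + (c * b2)^2) := by
  have hcd2 : (c * d)^2 = 1 := by rw [hcd]; norm_num
  nlinarith [sq_nonneg (c^2 * a1 * b2 - d^2 * b1 * a2), hcd2, sq_nonneg (c*d)]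

lemma stmt16_amgm {m s t : ℝ} (hm : 0 ≤ m) (hs : 0 ≤ s) (ht : 0 ≤ t) :
    (m + s) * (m + t) ≤ (m + (s + t) / 2)^2 := by
  nlinarith [sq_nonneg (s - t)]

lemma stmt16_cancel {y k : ℝ} (hy : 0 < y) (h : y^2 ≤ k * y) : y ≤ k := by
  nlinarith

lemma stmt16_le_of_sq_le_sq {a b : ℝ} (h : a^2 ≤ b^2) (hb : 0 ≤ b) : a ≤ b := by
  by_contra h'; push_neg at h'; nlinarith

lemma stmt16_sa_move {T : H →L[ℂ] H} (hT : IsSelfAdjoint T) (u v : H) :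
    (inner ℂ (T u) v : ℂ) = inner ℂ u (T v) := by
  have hT' : adjoint T = T := by rw [← star_eq_adjoint]; exact hT
  nth_rewrite 1 [← hT']
  exact adjoint_inner_left T v u

lemma stmt16_re_inner_le_cs (u v : H) : RCLike.re (inner ℂ u v : ℂ) ≤ ‖u‖ * ‖v‖ :=
  (RCLike.re_le_norm _).trans (norm_inner_le_norm u v)

lemma stmt16_amul_sa (C : H →L[ℂ] H) : IsSelfAdjoint (adjoint C * C) := by
  rw [← star_eq_adjoint]; exact IsSelfAdjoint.star_mul_self C

lemma stmt16_mula_sa (C : H →L[ℂ] H) : IsSelfAdjoint (C * adjoint C) := by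
  nth_rewrite 1 [← adjoint_adjoint C]
  rw [← star_eq_adjoint]; exact IsSelfAdjoint.star_mul_self (adjoint C)

lemma stmt16_amul_spec_nonneg (C : H →L[ℂ] H) ⦃z : ℝ⦄
    (hz : z ∈ spectrum ℝ (adjoint C * C)) : 0 ≤ z := by
  refine spectrum_nonneg_of_nonneg ?_ hz
  rw [← star_eq_adjoint]; exact star_mul_self_nonneg C

lemma stmt16_mula_spec_nonneg (C : H →L[ℂ] H) ⦃z : ℝ⦄
    (hz : z ∈ spectrum ℝ (C * adjoint C)) : 0 ≤ z := by
  refine spectrum_nonneg_of_nonneg ?_ hz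
  nth_rewrite 1 [← adjoint_adjoint C]
  rw [← star_eq_adjoint]; exact star_mul_self_nonneg (adjoint C)

lemma stmt16_oabs_spec_nonneg (C : H →L[ℂ] H) ⦃z : ℝ⦄ (hz : z ∈ spectrum ℝ (oabs C)) :
    0 ≤ z := by
  rw [oabs, cfc_map_spectrum Real.sqrt _ (stmt16_amul_sa C)
    Real.continuous_sqrt.continuousOn] at hz
  obtain ⟨t, -, rfl⟩ := hz
  exact Real.sqrt_nonneg t

lemma stmt16_oabs_adjoint (C : H →L[ℂ] H) :
    oabs (adjoint C) = cfc Real.sqrt (C * adjoint C) := by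
  rw [oabs, adjoint_adjoint]

/-! ### The intertwining identity `C · u(C*C) = u(CC*) · C` -/

lemma stmt16_intertwine (C : H →L[ℂ] H) {u : ℝ → ℝ} (hu : Continuous u) :
    C * cfc u (adjoint C * C) = cfc u (C * adjoint C) * C := by
  rcases subsingleton_or_nontrivial H with hH | hH
  · ext x; exact Subsingleton.elim _ _
  set p := adjoint C * C with hp_def
  set q := C * adjoint C with hq_def
  have hp : IsSelfAdjoint p := stmt16_amul_sa C
  have hq : IsSelfAdjoint q := stmt16_mula_sa C
  have hcomm : C * p = q * C := by rw [hp_def, hq_def, mul_assoc]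
  set M := max ‖p‖ ‖q‖ with hM
  have hMp : ‖p‖ ≤ M := le_max_left _ _
  have hMq : ‖q‖ ≤ M := le_max_right _ _
  have hσp : spectrum ℝ p ⊆ Set.Icc (-M) M := by
    intro x hx
    have h2 := spectrum.norm_le_norm_of_mem hx
    rw [Real.norm_eq_abs, abs_le] at h2
    exact ⟨by linarith [h2.1], by linarith [h2.2]⟩
  have hσq : spectrum ℝ q ⊆ Set.Icc (-M) M := by
    intro x hx
    have h2 := spectrum.norm_le_norm_of_mem hx
    rw [Real.norm_eq_abs, abs_le] at h2
    exact ⟨by linarith [h2.1], by linarith [h2.2]⟩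
  rw [← sub_eq_zero, ← norm_le_zero_iff]
  refine le_of_forall_pos_le_add fun ε hε => ?_
  have hd : (0:ℝ) < 2 * ‖C‖ + 1 := by positivity
  obtain ⟨P, hP⟩ := exists_polynomial_near_of_continuousOn (-M) M u hu.continuousOn
    (ε / (2 * ‖C‖ + 1)) (by positivity)
  have hε' : (0:ℝ) ≤ ε / (2 * ‖C‖ + 1) := by positivity
  have hup : ‖cfc u p - Polynomial.aeval p P‖ ≤ ε / (2 * ‖C‖ + 1) := by
    rw [← cfc_polynomial P p hp, ← cfc_sub u P.eval p (hu.continuousOn)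
      (Polynomial.continuous _).continuousOn]
    refine norm_cfc_le hε' fun x hx => ?_
    rw [Real.norm_eq_abs, abs_sub_comm]
    exact (hP x (hσp hx)).le
  have huq : ‖cfc u q - Polynomial.aeval q P‖ ≤ ε / (2 * ‖C‖ + 1) := by
    rw [← cfc_polynomial P q hq, ← cfc_sub u P.eval q (hu.continuousOn)
      (Polynomial.continuous _).continuousOn]
    refine norm_cfc_le hε' fun x hx => ?_
    rw [Real.norm_eq_abs, abs_sub_comm]
    exact (hP x (hσq hx)).le
  have hsplit : C * cfc u p - cfc u q * C
      = C * (cfc u p - Polynomial.aeval p P) + (Polynomial.aeval q P - cfc u q) * C := by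
    rw [mul_sub, sub_mul, stmt16_comm_aeval hcomm]; abel
  rw [hsplit]
  have hmul : (ε / (2 * ‖C‖ + 1)) * (2 * ‖C‖ + 1) = ε := div_mul_cancel₀ ε hd.ne'
  calc ‖C * (cfc u p - Polynomial.aeval p P) + (Polynomial.aeval q P - cfc u q) * C‖
      ≤ ‖C * (cfc u p - Polynomial.aeval p P)‖ + ‖(Polynomial.aeval q P - cfc u q) * C‖ :=
        norm_add_le _ _
    _ ≤ ‖C‖ * (ε / (2 * ‖C‖ + 1)) + (ε / (2 * ‖C‖ + 1)) * ‖C‖ := by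
        gcongr
        · exact (norm_mul_le _ _).trans (by gcongr)
        · refine (norm_mul_le _ _).trans ?_
          rw [norm_sub_rev] at huq
          gcongr
    _ ≤ 0 + ε := by nlinarith [norm_nonneg C]

/-! ### The quadratic-form bound for a sum of two squares -/

lemma stmt16_quad_bound (R S : H →L[ℂ] H) (hR : IsSelfAdjoint R) (hS : IsSelfAdjoint S)
    (x : H) :
    ‖R x‖^2 + ‖S x‖^2 ≤ (max (‖R‖^2) (‖S‖^2) + ‖R * S‖) * ‖x‖^2 := by
  set K := max (‖R‖^2) (‖S‖^2) + ‖R * S‖ with hK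
  have hK0 : 0 ≤ K := by positivity
  set w := R (R x) + S (S x) with hw
  set ρ := ‖R x‖^2 + ‖S x‖^2 with hρ
  have hρ0 : 0 ≤ ρ := by positivity
  have h1 : ρ = RCLike.re (inner ℂ w x : ℂ) := by
    rw [hw, inner_add_left, map_add, stmt16_sa_move hR, stmt16_sa_move hS,
      inner_self_eq_norm_sq (𝕜 := ℂ) (R x), inner_self_eq_norm_sq (𝕜 := ℂ) (S x)]
  have h2 : ρ ≤ ‖w‖ * ‖x‖ := h1 ▸ stmt16_re_inner_le_cs w x
  have hSR : ‖S * R‖ = ‖R * S‖ := by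
    rw [← norm_star (S * R), star_mul, hR.star_eq, hS.star_eq]
  have hcross : RCLike.re (inner ℂ (R (R x)) (S (S x)) : ℂ) ≤ ‖R * S‖ * (‖R x‖ * ‖S x‖) := by
    have e : (inner ℂ (R (R x)) (S (S x)) : ℂ) = inner ℂ ((S * R) (R x)) (S x) := by
      rw [ContinuousLinearMap.mul_apply, stmt16_sa_move hS]
    rw [e]
    refine (stmt16_re_inner_le_cs _ _).trans ?_
    calc ‖(S * R) (R x)‖ * ‖S x‖ ≤ (‖S * R‖ * ‖R x‖) * ‖S x‖ := by
          gcongr; exact le_opNorm _ _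
      _ = ‖R * S‖ * (‖R x‖ * ‖S x‖) := by rw [hSR]; ring
  have h3 : ‖w‖^2 ≤ K * ρ := by
    have hcross2 : RCLike.re (inner ℂ (S (S x)) (R (R x)) : ℂ)
        = RCLike.re (inner ℂ (R (R x)) (S (S x)) : ℂ) := by
      rw [← inner_conj_symm]
      exact RCLike.conj_re _
    have hnorm2 : ‖w‖^2 = ‖R (R x)‖^2 + ‖S (S x)‖^2
        + 2 * RCLike.re (inner ℂ (R (R x)) (S (S x)) : ℂ) := by
      rw [← inner_self_eq_norm_sq (𝕜 := ℂ) w, hw, inner_add_add_self]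
      simp only [map_add]
      rw [inner_self_eq_norm_sq (𝕜 := ℂ) (R (R x)), inner_self_eq_norm_sq (𝕜 := ℂ) (S (S x)),
        hcross2]
      ring
    have hRR : ‖R (R x)‖ ≤ ‖R‖ * ‖R x‖ := le_opNorm _ _
    have hSS : ‖S (S x)‖ ≤ ‖S‖ * ‖S x‖ := le_opNorm _ _
    have hmaxR : ‖R‖^2 ≤ max (‖R‖^2) (‖S‖^2) := le_max_left _ _
    have hmaxS : ‖S‖^2 ≤ max (‖R‖^2) (‖S‖^2) := le_max_right _ _
    have hRS0 : (0:ℝ) ≤ ‖R * S‖ := norm_nonneg _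
    nlinarith [sq_nonneg (‖R x‖ - ‖S x‖), norm_nonneg (R (R x)), norm_nonneg (S (S x)),
      norm_nonneg (R x), norm_nonneg (S x), norm_nonneg R, norm_nonneg S,
      sq_nonneg ‖R x‖, sq_nonneg ‖S x‖]
  have h4 : ρ^2 ≤ K * ρ * ‖x‖^2 := by nlinarith [norm_nonneg w, norm_nonneg x, sq_nonneg ‖x‖]
  rcases hρ0.eq_or_lt with h | h
  · rw [← h]; positivity
  · exact le_of_mul_le_mul_left (by nlinarith) h

/-! ### The generalized mixed Schwarz inequality -/

lemma stmt16_mixed_schwarz_eps (C : H →L[ℂ] H) {f g : ℝ → ℝ}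
    (hf : Continuous f) (hg : Continuous g)
    (hf0 : ∀ x, 0 ≤ x → 0 ≤ f x) (hg0 : ∀ x, 0 ≤ x → 0 ≤ g x)
    (hfg : ∀ x, 0 ≤ x → f x * g x = x) (x y : H) {ε : ℝ} (hε : 0 < ε) :
    ‖(inner ℂ (C x) y : ℂ)‖
      ≤ (‖cfc g (oabs C) x‖ + ε * ‖x‖) * ‖cfc f (oabs (adjoint C)) y‖ := by
  set p := adjoint C * C with hp_def
  set q := C * adjoint C with hq_def
  have hp : IsSelfAdjoint p := stmt16_amul_sa C
  have hq : IsSelfAdjoint q := stmt16_mula_sa C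
  set D := oabs C with hD_def
  have hD_eq : D = cfc Real.sqrt p := rfl
  have hD : IsSelfAdjoint D := cfc_predicate Real.sqrt p
  have hDnn : ∀ z ∈ spectrum ℝ D, 0 ≤ z := fun z hz => stmt16_oabs_spec_nonneg C hz
  have hqnn : ∀ z ∈ spectrum ℝ q, 0 ≤ z := fun z hz => stmt16_mula_spec_nonneg C hz
  have hgε_pos : ∀ z ∈ spectrum ℝ D, g z + ε ≠ 0 := fun z hz => by
    have := hg0 z (hDnn z hz); positivity
  have hgεc : ContinuousOn (fun r => g r + ε) (spectrum ℝ D) :=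
    (hg.add continuous_const).continuousOn
  have hkc : ContinuousOn (fun r => (g r + ε)⁻¹) (spectrum ℝ D) :=
    ContinuousOn.inv₀ hgεc hgε_pos
  set hh := cfc (fun r => g r + ε) D with hh_def
  set k := cfc (fun r => (g r + ε)⁻¹) D with hk_def
  have hk : IsSelfAdjoint k := cfc_predicate _ D
  have hkh : k * hh = 1 := by
    rw [hh_def, hk_def, ← cfc_mul _ _ D hkc hgεc]
    rw [cfc_congr (g := fun _ => 1) (fun z hz => inv_mul_cancel₀ (hgε_pos z hz))]
    exact cfc_const_one ℝ D
  have hxkh : k (hh x) = x := by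
    have := congrArg (fun T : H →L[ℂ] H => T x) hkh
    simpa [mul_apply] using this
  set G := cfc g D with hG_def
  set F' := cfc f (oabs (adjoint C)) with hF_def
  have hF'sa : IsSelfAdjoint F' := cfc_predicate _ _
  have stepA : (inner ℂ (C x) y : ℂ) = inner ℂ (hh x) (k (adjoint C y)) := by
    conv_lhs => rw [← hxkh]
    rw [← adjoint_inner_right C (k (hh x)) y, stmt16_sa_move hk]
  set v := adjoint C y with hv_def
  set m : ℝ → ℝ := fun r => (g r + ε)⁻¹ * (g r + ε)⁻¹ with hm_def
  set u : ℝ → ℝ := m ∘ Real.sqrt with hu_def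
  have hu : Continuous u := by
    apply Continuous.mul <;>
    exact (Continuous.inv₀ ((hg.comp Real.continuous_sqrt).add continuous_const)
      (fun t => by have := hg0 _ (Real.sqrt_nonneg t); positivity))
  have hmc : ContinuousOn m (Real.sqrt '' spectrum ℝ p) := by
    have : ∀ z ∈ Real.sqrt '' spectrum ℝ p, g z + ε ≠ 0 := by
      rintro z ⟨t, -, rfl⟩
      have := hg0 _ (Real.sqrt_nonneg t); positivity
    exact ((hg.continuousOn.add continuousOn_const).inv₀ this).mul
      ((hg.continuousOn.add continuousOn_const).inv₀ this)
  have hkk : k * k = cfc u p := by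
    rw [hk_def, ← cfc_mul _ _ D hkc hkc, hD_eq,
      ← cfc_comp m Real.sqrt p hp hmc Real.continuous_sqrt.continuousOn]
  have hCkkC : C * (k * k) * adjoint C = cfc (fun t => u t * t) q := by
    rw [hkk, stmt16_intertwine C hu, mul_assoc, ← hq_def]
    nth_rewrite 2 [← cfc_id' ℝ q hq]
    rw [← cfc_mul u (fun t => t) q hu.continuousOn continuous_id'.continuousOn]
  set φ : ℝ → ℝ := fun t => u t * t with hφ_def
  set ψ : ℝ → ℝ := fun t => f (Real.sqrt t) * f (Real.sqrt t) with hψ_def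
  have hψc : Continuous ψ := by
    apply Continuous.mul <;> exact hf.comp Real.continuous_sqrt
  have hφc : Continuous φ := hu.mul continuous_id
  have hkv : ‖k v‖^2 = RCLike.re (inner ℂ y (cfc φ q y) : ℂ) := by
    rw [← inner_self_eq_norm_sq (𝕜 := ℂ) (k v), stmt16_sa_move hk, hv_def]
    rw [adjoint_inner_left C]
    have : C (k (k (adjoint C y))) = (C * (k * k) * adjoint C) y := by
      simp [mul_apply]
    rw [this, hCkkC]
  have hmono : RCLike.re (inner ℂ y (cfc φ q y) : ℂ) ≤ RCLike.re (inner ℂ y (cfc ψ q y) : ℂ) := by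
    have hδnn : ∀ t ∈ spectrum ℝ q, 0 ≤ ψ t - φ t := by
      intro t ht
      have ht0 : 0 ≤ t := hqnn t ht
      have hb0 : 0 ≤ g (Real.sqrt t) := hg0 _ (Real.sqrt_nonneg t)
      have ha0 : 0 ≤ f (Real.sqrt t) := hf0 _ (Real.sqrt_nonneg t)
      have hab : f (Real.sqrt t) * g (Real.sqrt t) = Real.sqrt t := hfg _ (Real.sqrt_nonneg t)
      have hteq : t = (f (Real.sqrt t) * g (Real.sqrt t))^2 := by
        rw [hab, Real.sq_sqrt ht0]
      have hbε : 0 < g (Real.sqrt t) + ε := by positivity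
      have hinv : (g (Real.sqrt t) + ε) * (g (Real.sqrt t) + ε)⁻¹ = 1 :=
        mul_inv_cancel₀ hbε.ne'
      have hc0 : 0 ≤ (g (Real.sqrt t) + ε)⁻¹ := by positivity
      have hbc : g (Real.sqrt t) * (g (Real.sqrt t) + ε)⁻¹ ≤ 1 := by nlinarith
      have hbc0 : 0 ≤ g (Real.sqrt t) * (g (Real.sqrt t) + ε)⁻¹ := mul_nonneg hb0 hc0
      have hsq : (g (Real.sqrt t) * (g (Real.sqrt t) + ε)⁻¹)^2 ≤ 1 := by nlinarith
      simp only [hψ_def, hφ_def, hu_def, hm_def, Function.comp_apply]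
      nlinarith [sq_nonneg (f (Real.sqrt t))]
    set w0 : ℝ → ℝ := fun t => Real.sqrt (ψ t - φ t) with hw0_def
    have hw0c : Continuous w0 := Real.continuous_sqrt.comp (hψc.sub hφc)
    have hw0sa : IsSelfAdjoint (cfc w0 q) := cfc_predicate _ q
    have hsplit : cfc ψ q - cfc φ q = cfc w0 q * cfc w0 q := by
      rw [← cfc_mul _ _ q hw0c.continuousOn hw0c.continuousOn]
      rw [cfc_congr (g := fun t => ψ t - φ t)
        (fun t ht => Real.mul_self_sqrt (hδnn t ht))]
      exact (cfc_sub ψ φ q hψc.continuousOn hφc.continuousOn).symm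
    have key : RCLike.re (inner ℂ y ((cfc ψ q - cfc φ q) y) : ℂ) = ‖cfc w0 q y‖^2 := by
      rw [hsplit, ContinuousLinearMap.mul_apply, ← stmt16_sa_move hw0sa, inner_self_eq_norm_sq (𝕜 := ℂ)]
    have expand : RCLike.re (inner ℂ y ((cfc ψ q - cfc φ q) y) : ℂ)
        = RCLike.re (inner ℂ y (cfc ψ q y) : ℂ) - RCLike.re (inner ℂ y (cfc φ q y) : ℂ) := by
      rw [sub_apply, inner_sub_right, map_sub]
    nlinarith [sq_nonneg ‖cfc w0 q y‖, key, expand]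
  have hpsi : RCLike.re (inner ℂ y (cfc ψ q y) : ℂ) = ‖F' y‖^2 := by
    have : cfc ψ q = F' * F' := by
      rw [hF_def, stmt16_oabs_adjoint, ← hq_def,
        ← cfc_mul _ _ (cfc Real.sqrt q) hf.continuousOn hf.continuousOn,
        ← cfc_comp (fun r => f r * f r) Real.sqrt q hq
          ((hf.continuousOn.mul hf.continuousOn)) Real.continuous_sqrt.continuousOn]
      rfl
    rw [this, ContinuousLinearMap.mul_apply, ← stmt16_sa_move hF'sa, inner_self_eq_norm_sq (𝕜 := ℂ)]
  have stepB : ‖k v‖ ≤ ‖F' y‖ := by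
    refine stmt16_le_of_sq_le_sq ?_ (norm_nonneg _)
    rw [hkv, ← hpsi]
    exact hmono
  have stepC : ‖hh x‖ ≤ ‖G x‖ + ε * ‖x‖ := by
    have : hh = G + algebraMap ℝ (H →L[ℂ] H) ε := by
      rw [hh_def, hG_def, ← cfc_const ε D hD, ← cfc_add D g _ hg.continuousOn continuousOn_const]
    calc ‖hh x‖ = ‖G x + ((algebraMap ℝ (H →L[ℂ] H)) ε) x‖ := by rw [this, add_apply]
      _ ≤ ‖G x‖ + ‖((algebraMap ℝ (H →L[ℂ] H)) ε) x‖ := norm_add_le _ _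
      _ = ‖G x‖ + ε * ‖x‖ := by
          rw [Algebra.algebraMap_eq_smul_one, smul_apply, ContinuousLinearMap.one_apply, norm_smul,
            Real.norm_of_nonneg hε.le]
  calc ‖(inner ℂ (C x) y : ℂ)‖ = ‖(inner ℂ (hh x) (k v) : ℂ)‖ := by rw [stepA, hv_def]
    _ ≤ ‖hh x‖ * ‖k v‖ := norm_inner_le_norm _ _
    _ ≤ (‖G x‖ + ε * ‖x‖) * ‖F' y‖ :=
        mul_le_mul stepC stepB (norm_nonneg _) (by positivity)

lemma stmt16_mixed_schwarz (C : H →L[ℂ] H) {f g : ℝ → ℝ}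
    (hf : Continuous f) (hg : Continuous g)
    (hf0 : ∀ x, 0 ≤ x → 0 ≤ f x) (hg0 : ∀ x, 0 ≤ x → 0 ≤ g x)
    (hfg : ∀ x, 0 ≤ x → f x * g x = x) (x y : H) :
    ‖(inner ℂ (C x) y : ℂ)‖ ≤ ‖cfc g (oabs C) x‖ * ‖cfc f (oabs (adjoint C)) y‖ := by
  refine le_of_forall_pos_le_add fun η hη => ?_
  have hd : (0:ℝ) < ‖x‖ * ‖cfc f (oabs (adjoint C)) y‖ + 1 := by positivity
  set ε := η / (‖x‖ * ‖cfc f (oabs (adjoint C)) y‖ + 1) with hε_def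
  have hε : 0 < ε := by positivity
  have h := stmt16_mixed_schwarz_eps C hf hg hf0 hg0 hfg x y hε
  have hmul : ε * (‖x‖ * ‖cfc f (oabs (adjoint C)) y‖ + 1) = η := div_mul_cancel₀ η hd.ne'
  refine h.trans ?_
  have h1 : (0:ℝ) ≤ ‖x‖ := norm_nonneg _
  have h2 : (0:ℝ) ≤ ‖cfc f (oabs (adjoint C)) y‖ := norm_nonneg _
  have h3 : (0:ℝ) ≤ ‖cfc g (oabs C) x‖ := norm_nonneg _
  nlinarith

/-! ### Norm bound for `cfc w (oabs C)` -/

lemma stmt16_norm_cfc_oabs_le [Nontrivial H] (C : H →L[ℂ] H) {w : ℝ → ℝ}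
    (hw0 : ∀ x, 0 ≤ x → 0 ≤ w x) (hwm : MonotoneOn w (Set.Ici 0)) :
    ‖cfc w (oabs C)‖ ≤ w ‖C‖ := by
  refine norm_cfc_le (hw0 _ (norm_nonneg C)) fun z hz => ?_
  have hz0 : 0 ≤ z := stmt16_oabs_spec_nonneg C hz
  have hzle : z ≤ ‖C‖ := by
    rw [oabs, cfc_map_spectrum Real.sqrt _ (stmt16_amul_sa C)
      Real.continuous_sqrt.continuousOn] at hz
    obtain ⟨t, ht, rfl⟩ := hz
    have ht0 : 0 ≤ t := stmt16_amul_spec_nonneg C ht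
    have htle := spectrum.norm_le_norm_of_mem ht
    have hnorm : ‖adjoint C * C‖ = ‖C‖ * ‖C‖ := by
      rw [← star_eq_adjoint]; exact CStarRing.norm_star_mul_self
    rw [Real.norm_of_nonneg ht0, hnorm] at htle
    calc Real.sqrt t ≤ Real.sqrt (‖C‖ * ‖C‖) := Real.sqrt_le_sqrt htle
      _ = ‖C‖ := Real.sqrt_mul_self (norm_nonneg C)
  rw [Real.norm_of_nonneg (hw0 z hz0)]
  exact hwm (Set.mem_Ici.mpr hz0) (Set.mem_Ici.mpr (norm_nonneg C)) hzle

theorem stmt_16 (A B : H →L[ℂ] H) (f g : ℝ → ℝ)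
    (hf : Continuous f) (hg : Continuous g)
    (hf0 : ∀ x, 0 ≤ x → 0 ≤ f x) (hg0 : ∀ x, 0 ≤ x → 0 ≤ g x)
    (hfm : MonotoneOn f (Set.Ici 0)) (hgm : MonotoneOn g (Set.Ici 0))
    (hfg : ∀ x, 0 ≤ x → f x * g x = x) :
    ‖A + B‖ ≤ max ‖A‖ ‖B‖
      + (1 / 2) * (‖cfc f (oabs B) * cfc g (oabs A)‖
          + ‖cfc f (oabs (adjoint A)) * cfc g (oabs (adjoint B))‖) := by
  rcases subsingleton_or_nontrivial H with hH | hH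
  · have hz : A + B = 0 := by ext x; exact Subsingleton.elim _ _
    rw [hz, norm_zero]
    have h1 : (0:ℝ) ≤ max ‖A‖ ‖B‖ := le_trans (norm_nonneg A) (le_max_left _ _)
    have h2 : (0:ℝ) ≤ ‖cfc f (oabs B) * cfc g (oabs A)‖ := norm_nonneg _
    have h3 : (0:ℝ) ≤ ‖cfc f (oabs (adjoint A)) * cfc g (oabs (adjoint B))‖ := norm_nonneg _
    nlinarith
  set s := ‖cfc f (oabs B) * cfc g (oabs A)‖ with hs_def
  set t := ‖cfc f (oabs (adjoint A)) * cfc g (oabs (adjoint B))‖ with ht_def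
  have hs0 : 0 ≤ s := norm_nonneg _
  have ht0 : 0 ≤ t := norm_nonneg _
  set m := max ‖A‖ ‖B‖ with hm_def
  have hm0 : 0 ≤ m := le_trans (norm_nonneg A) (le_max_left _ _)
  rcases hm0.eq_or_lt with hm | hm
  · -- degenerate case : A = B = 0
    have hA : A = 0 := by
      rw [← norm_le_zero_iff, hm]; exact le_max_left _ _
    have hB : B = 0 := by
      rw [← norm_le_zero_iff, hm]; exact le_max_right _ _
    rw [hA, hB, add_zero, norm_zero]
    have h1 : (0:ℝ) ≤ max ‖(0:H →L[ℂ] H)‖ ‖(0:H →L[ℂ] H)‖ :=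
      le_trans (norm_nonneg _) (le_max_left _ _)
    nlinarith
  -- main case
  set F := max (f ‖A‖) (f ‖B‖) with hF_def
  have hfA0 : 0 ≤ f ‖A‖ := hf0 _ (norm_nonneg A)
  have hfB0 : 0 ≤ f ‖B‖ := hf0 _ (norm_nonneg B)
  have hgA0 : 0 ≤ g ‖A‖ := hg0 _ (norm_nonneg A)
  have hgB0 : 0 ≤ g ‖B‖ := hg0 _ (norm_nonneg B)
  have hF : 0 < F := by
    by_contra hc
    push_neg at hc
    have h1 : f ‖A‖ = 0 := le_antisymm (le_trans (le_max_left _ _) hc) hfA0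
    have h2 : f ‖B‖ = 0 := le_antisymm (le_trans (le_max_right _ _) hc) hfB0
    have hnA : ‖A‖ = 0 := by
      have := hfg ‖A‖ (norm_nonneg A); rw [h1, zero_mul] at this; linarith
    have hnB : ‖B‖ = 0 := by
      have := hfg ‖B‖ (norm_nonneg B); rw [h2, zero_mul] at this; linarith
    rw [hm_def, hnA, hnB] at hm
    simp at hm
  -- scalar inequalities
  have hFgA : F * g ‖A‖ ≤ m := by
    rcases le_total ‖A‖ ‖B‖ with h | h
    · have hfab : f ‖A‖ ≤ f ‖B‖ :=
        hfm (Set.mem_Ici.mpr (norm_nonneg A)) (Set.mem_Ici.mpr (norm_nonneg B)) h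
      have hgab : g ‖A‖ ≤ g ‖B‖ :=
        hgm (Set.mem_Ici.mpr (norm_nonneg A)) (Set.mem_Ici.mpr (norm_nonneg B)) h
      have hFf : F = f ‖B‖ := max_eq_right hfab
      have hmB : m = ‖B‖ := max_eq_right h
      calc F * g ‖A‖ = f ‖B‖ * g ‖A‖ := by rw [hFf]
        _ ≤ f ‖B‖ * g ‖B‖ := mul_le_mul_of_nonneg_left hgab hfB0
        _ = ‖B‖ := hfg ‖B‖ (norm_nonneg B)
        _ ≤ m := hmB.ge
    · have hmA : m = ‖A‖ := max_eq_left h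
      have hfb : f ‖B‖ ≤ f ‖A‖ :=
        hfm (Set.mem_Ici.mpr (norm_nonneg B)) (Set.mem_Ici.mpr (norm_nonneg A)) h
      have hFeq : F = f ‖A‖ := max_eq_left hfb
      calc F * g ‖A‖ = f ‖A‖ * g ‖A‖ := by rw [hFeq]
        _ = ‖A‖ := hfg ‖A‖ (norm_nonneg A)
        _ ≤ m := hmA.ge
  have hFgB : F * g ‖B‖ ≤ m := by
    rcases le_total ‖A‖ ‖B‖ with h | h
    · have hfab : f ‖A‖ ≤ f ‖B‖ :=
        hfm (Set.mem_Ici.mpr (norm_nonneg A)) (Set.mem_Ici.mpr (norm_nonneg B)) h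
      have hFeq : F = f ‖B‖ := max_eq_right hfab
      have hmB : m = ‖B‖ := max_eq_right h
      calc F * g ‖B‖ = f ‖B‖ * g ‖B‖ := by rw [hFeq]
        _ = ‖B‖ := hfg ‖B‖ (norm_nonneg B)
        _ ≤ m := hmB.ge
    · have hfb : f ‖B‖ ≤ f ‖A‖ :=
        hfm (Set.mem_Ici.mpr (norm_nonneg B)) (Set.mem_Ici.mpr (norm_nonneg A)) h
      have hgb : g ‖B‖ ≤ g ‖A‖ :=
        hgm (Set.mem_Ici.mpr (norm_nonneg B)) (Set.mem_Ici.mpr (norm_nonneg A)) h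
      have hFeq : F = f ‖A‖ := max_eq_left hfb
      have hmA : m = ‖A‖ := max_eq_left h
      calc F * g ‖B‖ = f ‖A‖ * g ‖B‖ := by rw [hFeq]
        _ ≤ f ‖A‖ * g ‖A‖ := mul_le_mul_of_nonneg_left hgb hfA0
        _ = ‖A‖ := hfg ‖A‖ (norm_nonneg A)
        _ ≤ m := hmA.ge
  have hfAF : f ‖A‖ ≤ F := le_max_left _ _
  have hfBF : f ‖B‖ ≤ F := le_max_right _ _
  clear_value s t m F
  -- the weight
  set μ := F / Real.sqrt m with hμ_def
  have hsm : 0 < Real.sqrt m := Real.sqrt_pos.mpr hm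
  have hμ : 0 < μ := by positivity
  have hμsq : μ^2 = F^2 / m := by
    rw [hμ_def, div_pow, Real.sq_sqrt hm.le]
  have hμinv : 0 < μ⁻¹ := by positivity
  clear_value μ
  have hmuA : ∀ c : ℝ, 0 ≤ c → F * c ≤ m → (μ * c)^2 ≤ m := by
    intro c hc hFc
    have h2 : (μ * c)^2 = (F * c)^2 / m := by
      rw [mul_pow, hμsq]; ring
    rw [h2, div_le_iff₀ hm]
    nlinarith [mul_le_mul hFc hFc (mul_nonneg hF.le hc) hm0]
  have hmuB : ∀ c : ℝ, 0 ≤ c → c ≤ F → (μ⁻¹ * c)^2 ≤ m := by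
    intro c hc hcF
    have h2 : (μ⁻¹ * c)^2 = c^2 * m / F^2 := by
      rw [mul_pow, inv_pow, hμsq, inv_div]
      ring
    rw [h2, div_le_iff₀ (by positivity)]
    nlinarith [mul_le_mul hcF hcF hc (le_trans hc hcF), hm0, sq_nonneg c,
      mul_le_mul_of_nonneg_left (mul_le_mul hcF hcF hc (le_trans hc hcF)) hm0]
  -- operators
  set GA := cfc g (oabs A) with hGA_def
  set FB := cfc f (oabs B) with hFB_def
  set FA' := cfc f (oabs (adjoint A)) with hFA'_def
  set GB' := cfc g (oabs (adjoint B)) with hGB'_def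
  have hGAsa : IsSelfAdjoint GA := cfc_predicate _ _
  have hFBsa : IsSelfAdjoint FB := cfc_predicate _ _
  have hFA'sa : IsSelfAdjoint FA' := cfc_predicate _ _
  have hGB'sa : IsSelfAdjoint GB' := cfc_predicate _ _
  have hGAn : ‖GA‖ ≤ g ‖A‖ := stmt16_norm_cfc_oabs_le A hg0 hgm
  have hFBn : ‖FB‖ ≤ f ‖B‖ := stmt16_norm_cfc_oabs_le B hf0 hfm
  have hFA'n : ‖FA'‖ ≤ f ‖A‖ := by
    have := stmt16_norm_cfc_oabs_le (adjoint A) hf0 hfm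
    rwa [(LinearIsometryEquiv.norm_map adjoint A : ‖adjoint A‖ = ‖A‖)] at this
  have hGB'n : ‖GB'‖ ≤ g ‖B‖ := by
    have := stmt16_norm_cfc_oabs_le (adjoint B) hg0 hgm
    rwa [(LinearIsometryEquiv.norm_map adjoint B : ‖adjoint B‖ = ‖B‖)] at this
  set R1 := μ • GA with hR1_def
  set S1 := μ⁻¹ • FB with hS1_def
  set R2 := μ⁻¹ • FA' with hR2_def
  set S2 := μ • GB' with hS2_def
  have hR1sa : IsSelfAdjoint R1 := by
    rw [hR1_def, IsSelfAdjoint, star_smul, star_trivial, hGAsa.star_eq]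
  have hS1sa : IsSelfAdjoint S1 := by
    rw [hS1_def, IsSelfAdjoint, star_smul, star_trivial, hFBsa.star_eq]
  have hR2sa : IsSelfAdjoint R2 := by
    rw [hR2_def, IsSelfAdjoint, star_smul, star_trivial, hFA'sa.star_eq]
  have hS2sa : IsSelfAdjoint S2 := by
    rw [hS2_def, IsSelfAdjoint, star_smul, star_trivial, hGB'sa.star_eq]
  -- norms of the scaled operators
  have hR1n : ‖R1‖^2 ≤ m := by
    have h2 : ‖R1‖ ≤ μ * g ‖A‖ := by
      rw [hR1_def, norm_smul, Real.norm_of_nonneg hμ.le]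
      exact mul_le_mul_of_nonneg_left hGAn hμ.le
    have h3 := hmuA (g ‖A‖) hgA0 hFgA
    nlinarith [norm_nonneg R1]
  have hS1n : ‖S1‖^2 ≤ m := by
    have h2 : ‖S1‖ ≤ μ⁻¹ * f ‖B‖ := by
      rw [hS1_def, norm_smul, Real.norm_of_nonneg hμinv.le]
      exact mul_le_mul_of_nonneg_left hFBn hμinv.le
    have h3 := hmuB (f ‖B‖) hfB0 hfBF
    nlinarith [norm_nonneg S1]
  have hR2n : ‖R2‖^2 ≤ m := by
    have h2 : ‖R2‖ ≤ μ⁻¹ * f ‖A‖ := by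
      rw [hR2_def, norm_smul, Real.norm_of_nonneg hμinv.le]
      exact mul_le_mul_of_nonneg_left hFA'n hμinv.le
    have h3 := hmuB (f ‖A‖) hfA0 hfAF
    nlinarith [norm_nonneg R2]
  have hS2n : ‖S2‖^2 ≤ m := by
    have h2 : ‖S2‖ ≤ μ * g ‖B‖ := by
      rw [hS2_def, norm_smul, Real.norm_of_nonneg hμ.le]
      exact mul_le_mul_of_nonneg_left hGB'n hμ.le
    have h3 := hmuA (g ‖B‖) hgB0 hFgB
    nlinarith [norm_nonneg S2]
  -- cross terms
  have hR1S1 : ‖R1 * S1‖ = s := by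
    have : R1 * S1 = GA * FB := by
      rw [hR1_def, hS1_def, smul_mul_assoc, mul_smul_comm, smul_smul,
        mul_inv_cancel₀ hμ.ne', one_smul]
    rw [this, hs_def, ← norm_star (FB * GA), star_mul, hGAsa.star_eq, hFBsa.star_eq]
  have hR2S2 : ‖R2 * S2‖ = t := by
    have : R2 * S2 = FA' * GB' := by
      rw [hR2_def, hS2_def, smul_mul_assoc, mul_smul_comm, smul_smul,
        inv_mul_cancel₀ hμ.ne', one_smul]
    rw [this, ht_def]
  -- quadratic form bounds
  have hq1 : ∀ x : H, ‖R1 x‖^2 + ‖S1 x‖^2 ≤ (m + s) * ‖x‖^2 := by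
    intro x
    refine (stmt16_quad_bound R1 S1 hR1sa hS1sa x).trans ?_
    have : max (‖R1‖^2) (‖S1‖^2) + ‖R1 * S1‖ ≤ m + s := by
      rw [hR1S1]
      exact add_le_add (max_le hR1n hS1n) (le_refl s)
    exact mul_le_mul_of_nonneg_right this (sq_nonneg _)
  have hq2 : ∀ y : H, ‖R2 y‖^2 + ‖S2 y‖^2 ≤ (m + t) * ‖y‖^2 := by
    intro y
    refine (stmt16_quad_bound R2 S2 hR2sa hS2sa y).trans ?_
    have : max (‖R2‖^2) (‖S2‖^2) + ‖R2 * S2‖ ≤ m + t := by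
      rw [hR2S2]
      exact add_le_add (max_le hR2n hS2n) (le_refl t)
    exact mul_le_mul_of_nonneg_right this (sq_nonneg _)
  clear_value GA FB FA' GB' R1 S1 R2 S2
  -- final assembly
  set κ := m + (s + t) / 2 with hκ_def
  have hκ0 : 0 ≤ κ := by positivity
  clear_value κ
  have hbound : ∀ x : H, ‖(A + B) x‖ ≤ κ * ‖x‖ := by
    intro x
    set y := (A + B) x with hy_def
    clear_value y
    rcases eq_or_ne y 0 with hy0 | hy0
    · rw [hy0, norm_zero]; exact mul_nonneg hκ0 (norm_nonneg x)
    have hyn : 0 < ‖y‖ := norm_pos_iff.mpr hy0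
    -- mixed Schwarz for A and B
    have hMSA : ‖(inner ℂ (A x) y : ℂ)‖ ≤ ‖GA x‖ * ‖FA' y‖ := by
      rw [hGA_def, hFA'_def]
      exact stmt16_mixed_schwarz A hf hg hf0 hg0 hfg x y
    have hMSB : ‖(inner ℂ (B x) y : ℂ)‖ ≤ ‖FB x‖ * ‖GB' y‖ := by
      rw [hFB_def, hGB'_def]
      exact stmt16_mixed_schwarz B hg hf hg0 hf0
        (fun z hz => by rw [mul_comm]; exact hfg z hz) x y
    have htri : ‖(inner ℂ ((A + B) x) y : ℂ)‖ ≤ ‖GA x‖ * ‖FA' y‖ + ‖FB x‖ * ‖GB' y‖ := by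
      rw [add_apply, inner_add_left]
      exact (norm_add_le _ _).trans (add_le_add hMSA hMSB)
    -- Cauchy–Schwarz with weights
    set a1 := ‖GA x‖ with ha1
    set b1 := ‖FB x‖ with hb1
    set a2 := ‖FA' y‖ with ha2
    set b2 := ‖GB' y‖ with hb2
    have hR1x : ‖R1 x‖ = μ * a1 := by
      rw [ha1, hR1_def, smul_apply, norm_smul, Real.norm_of_nonneg hμ.le]
    have hS1x : ‖S1 x‖ = μ⁻¹ * b1 := by
      rw [hb1, hS1_def, smul_apply, norm_smul, Real.norm_of_nonneg hμinv.le]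
    have hR2y : ‖R2 y‖ = μ⁻¹ * a2 := by
      rw [ha2, hR2_def, smul_apply, norm_smul, Real.norm_of_nonneg hμinv.le]
    have hS2y : ‖S2 y‖ = μ * b2 := by
      rw [hb2, hS2_def, smul_apply, norm_smul, Real.norm_of_nonneg hμ.le]
    clear_value a1 b1 a2 b2
    have hP1 : (μ * a1)^2 + (μ⁻¹ * b1)^2 ≤ (m + s) * ‖x‖^2 := by
      rw [← hR1x, ← hS1x]; exact hq1 x
    have hP2 : (μ⁻¹ * a2)^2 + (μ * b2)^2 ≤ (m + t) * ‖y‖^2 := by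
      rw [← hR2y, ← hS2y]; exact hq2 y
    have ha10 : 0 ≤ a1 := by rw [ha1]; exact norm_nonneg _
    have hb10 : 0 ≤ b1 := by rw [hb1]; exact norm_nonneg _
    have ha20 : 0 ≤ a2 := by rw [ha2]; exact norm_nonneg _
    have hb20 : 0 ≤ b2 := by rw [hb2]; exact norm_nonneg _
    have hμμ : μ * μ⁻¹ = 1 := mul_inv_cancel₀ hμ.ne'
    have hCS : (a1 * a2 + b1 * b2)^2
        ≤ ((μ * a1)^2 + (μ⁻¹ * b1)^2) * ((μ⁻¹ * a2)^2 + (μ * b2)^2) :=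
      stmt16_cs_weights hμμ
    have hprod : ((μ * a1)^2 + (μ⁻¹ * b1)^2) * ((μ⁻¹ * a2)^2 + (μ * b2)^2)
        ≤ ((m + s) * ‖x‖^2) * ((m + t) * ‖y‖^2) := by
      have hL0 : 0 ≤ (μ * a1)^2 + (μ⁻¹ * b1)^2 := by positivity
      have hR0 : 0 ≤ (μ⁻¹ * a2)^2 + (μ * b2)^2 := by positivity
      exact mul_le_mul hP1 hP2 hR0 (le_trans hL0 hP1)
    have hmsmtκ : (m + s) * (m + t) ≤ κ^2 := by
      rw [hκ_def]; exact stmt16_amgm hm0 hs0 ht0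
    have hyy : ‖y‖^2 ≤ a1 * a2 + b1 * b2 := by
      have h1 : ‖y‖^2 = RCLike.re (inner ℂ ((A + B) x) y : ℂ) := by
        rw [← hy_def, inner_self_eq_norm_sq (𝕜 := ℂ)]
      rw [h1]
      exact (RCLike.re_le_norm _).trans htri
    -- combine : (‖y‖^2)^2 ≤ (κ ‖x‖ ‖y‖)^2
    have hfin : (‖y‖^2)^2 ≤ (κ * ‖x‖ * ‖y‖)^2 := by
      have h5 : (a1 * a2 + b1 * b2)^2 ≤ (κ * ‖x‖ * ‖y‖)^2 := by
        calc (a1 * a2 + b1 * b2)^2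
            ≤ ((m + s) * ‖x‖^2) * ((m + t) * ‖y‖^2) := hCS.trans hprod
          _ = ((m + s) * (m + t)) * (‖x‖^2 * ‖y‖^2) := by ring
          _ ≤ κ^2 * (‖x‖^2 * ‖y‖^2) := by
              refine mul_le_mul_of_nonneg_right hmsmtκ (by positivity)
          _ = (κ * ‖x‖ * ‖y‖)^2 := by ring
      have h6 : (‖y‖^2)^2 ≤ (a1 * a2 + b1 * b2)^2 :=
        pow_le_pow_left₀ (sq_nonneg ‖y‖) hyy 2
      exact h6.trans h5
    have h7 : ‖y‖^2 ≤ κ * ‖x‖ * ‖y‖ :=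
      stmt16_le_of_sq_le_sq hfin
        (mul_nonneg (mul_nonneg hκ0 (norm_nonneg x)) (norm_nonneg y))
    exact stmt16_cancel hyn h7
  have hfinal := opNorm_le_bound (A + B) hκ0 hbound
  exact hfinal.trans (le_of_eq (by rw [hκ_def]; ring))
end
end
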